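/- arXiv:1707.06063 — 12 statements merged into one kernel-verified Lean document; each statement's English description precedes it below -/
import Mathlib

section
/- If every client in a finite bipartite graph G = (C ∪ S, E) has at least one neighbor, and max over nonempty K ⊆ C of |K|/|N(K)| equals p/q, then there exists a nonnegative flow (x_e) on the edges such that every client c sends total flow 1 (∑_{s ∈ N(c)} x_{cs} = 1) and every server s receives total flow at most p/q (∑_{c ∈ N(s)} x_{cs} ≤ p/q). -/
open scoped Classical

/-- The neighborhood in `S` of a set of clients `K`, given adjacency `Adj`. -/
noncomputable def NB {C S : Type*} [Fintype S] (Adj : C → S → Prop) (K : Finset C) : Finset S :=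
  Finset.univ.filter fun s => ∃ c ∈ K, Adj c s

/-- If every client has at least one neighbor and the maximum of `|K|/|N(K)|` over
nonempty `K ⊆ C` equals `p/q`, then there is a server flow (nonnegative values on edges,
each client sending total flow 1) in which every server receives at most `p/q`. -/
theorem stmt_0 {C S : Type*} [Fintype C] [Fintype S]
    (Adj : C → S → Prop) (p q : ℕ) (hq : 0 < q)
    (hnb : ∀ c : C, ∃ s, Adj c s)
    (hmax : IsGreatest
      {r : ℝ | ∃ K : Finset C, K.Nonempty ∧ r = (K.card : ℝ) / ((NB Adj K).card : ℝ)}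
      ((p : ℝ) / (q : ℝ))) :
    ∃ x : C → S → ℝ,
      (∀ c s, 0 ≤ x c s) ∧
      (∀ c s, ¬ Adj c s → x c s = 0) ∧
      (∀ c, ∑ s, x c s = 1) ∧
      (∀ s, ∑ c, x c s ≤ (p : ℝ) / (q : ℝ)) := by
  set t : C × Fin q → Finset (S × Fin p) :=
    fun ci => (Finset.univ.filter fun s => Adj ci.1 s) ×ˢ Finset.univ with ht
  have hall : ∀ A : Finset (C × Fin q), A.card ≤ (A.biUnion t).card := by
    intro A
    rcases A.eq_empty_or_nonempty with rfl | hA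
    · simp
    set K := A.image Prod.fst with hK
    have hKne : K.Nonempty := hA.image _
    have hbi : A.biUnion t = (NB Adj K) ×ˢ (Finset.univ : Finset (Fin p)) := by
      ext ⟨s, j⟩
      simp only [Finset.mem_biUnion, ht, Finset.mem_product, Finset.mem_filter,
        Finset.mem_univ, true_and, and_true, NB, hK, Finset.mem_image]
      constructor
      · rintro ⟨⟨c, i⟩, hci, hadj⟩
        exact ⟨c, ⟨⟨c, i⟩, hci, rfl⟩, hadj⟩
      · rintro ⟨c, ⟨⟨c', i⟩, hci, rfl⟩, hadj⟩
        exact ⟨⟨c', i⟩, hci, hadj⟩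
    have hNBne : (NB Adj K).Nonempty := by
      obtain ⟨c, hc⟩ := hKne
      obtain ⟨s, hs⟩ := hnb c
      refine ⟨s, ?_⟩
      simp only [NB, Finset.mem_filter, Finset.mem_univ, true_and]
      exact ⟨c, hc, hs⟩
    have hle : (K.card : ℝ) / ((NB Adj K).card : ℝ) ≤ (p : ℝ) / (q : ℝ) :=
      hmax.2 ⟨K, hKne, rfl⟩
    have h1 : K.card * q ≤ (NB Adj K).card * p := by
      have hq' : (0:ℝ) < q := by exact_mod_cast hq
      have hNB' : (0:ℝ) < ((NB Adj K).card : ℝ) := by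
        exact_mod_cast Finset.card_pos.2 hNBne
      rw [div_le_div_iff₀ hNB' hq', mul_comm ((p:ℝ))] at hle
      exact_mod_cast hle
    calc A.card ≤ (K ×ˢ (Finset.univ : Finset (Fin q))).card := by
          apply Finset.card_le_card
          intro ci hci
          rw [Finset.mem_product]
          exact ⟨Finset.mem_image_of_mem _ hci, Finset.mem_univ _⟩
      _ = K.card * q := by simp [Finset.card_product]
      _ ≤ (NB Adj K).card * p := h1
      _ = (A.biUnion t).card := by rw [hbi]; simp [Finset.card_product]
  obtain ⟨f, hfinj, hft⟩ := (Finset.all_card_le_biUnion_card_iff_exists_injective t).mp hall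
  have hadjf : ∀ ci : C × Fin q, Adj ci.1 (f ci).1 := by
    intro ci
    have := hft ci
    rw [ht, Finset.mem_product, Finset.mem_filter] at this
    exact this.1.2
  set cnt : C → S → ℕ := fun c s => (Finset.univ.filter fun i : Fin q => (f (c, i)).1 = s).card
    with hcnt
  refine ⟨fun c s => (cnt c s : ℝ) / q, ?_, ?_, ?_, ?_⟩
  · intro c s
    positivity
  · intro c s hcs
    have : cnt c s = 0 := by
      rw [hcnt]
      simp only [Finset.card_eq_zero, Finset.filter_eq_empty_iff]
      intro i _ h
      exact hcs (h ▸ hadjf (c, i))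
    simp [this]
  · intro c
    have hsum : ∑ s, cnt c s = q := by
      have := Finset.card_eq_sum_card_fiberwise
        (f := fun i : Fin q => (f (c, i)).1) (s := Finset.univ) (t := Finset.univ)
        (fun i _ => Finset.mem_univ _)
      simpa [hcnt] using this.symm
    rw [← Finset.sum_div]
    rw [show ∑ s, (cnt c s : ℝ) = ((∑ s, cnt c s : ℕ) : ℝ) by push_cast; ring]
    rw [hsum]
    field_simp
  · intro s
    have hsum : ∑ c, cnt c s = (Finset.univ.filter fun ci : C × Fin q => (f ci).1 = s).card := by
      rw [Finset.card_filter, Fintype.sum_prod_type]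
      simp only [hcnt, Finset.card_filter]
    have hbound : (Finset.univ.filter fun ci : C × Fin q => (f ci).1 = s).card ≤ p := by
      have := Finset.card_le_card_of_injOn (f := fun ci : C × Fin q => (f ci).2)
        (s := Finset.univ.filter fun ci : C × Fin q => (f ci).1 = s)
        (t := (Finset.univ : Finset (Fin p)))
        (fun a _ => Finset.mem_univ _) ?_
      · simpa using this
      · intro a ha b hb hab
        rw [Finset.coe_filter] at ha hb
        simp only [Set.mem_setOf_eq] at ha hb
        apply hfinj
        exact Prod.ext (ha.2.trans hb.2.symm) hab
    have h2 : ∑ c, cnt c s ≤ p := hsum ▸ hbound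
    have h3 : (∑ c, (cnt c s : ℝ)) ≤ (p : ℝ) := by exact_mod_cast h2
    rw [← Finset.sum_div]
    gcongr
end

section
/- Let α be a balanced server flow, let α̂ = max_{s ∈ S} α(s), let Ŝ = {s ∈ S : α(s) = α̂}, and let K̂ = {c ∈ C : A(c) ∩ Ŝ ≠ ∅}. Then N(K̂) = Ŝ and |K̂| = α̂ · |Ŝ|. -/
open scoped Classical

/-- The load of server `s` under flow `x`. -/
def load {C S : Type*} [Fintype C] (x : C → S → ℝ) (s : S) : ℝ := ∑ c, x c s

/-- `x` is a server flow: nonnegative, supported on edges, each client sends one unit. -/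
def IsServerFlow {C S : Type*} [Fintype S] (Adj : C → S → Prop) (x : C → S → ℝ) : Prop :=
  (∀ c s, 0 ≤ x c s) ∧ (∀ c s, ¬ Adj c s → x c s = 0) ∧ (∀ c, ∑ s, x c s = 1)

/-- `x` is balanced: each client only sends flow to its minimum-load neighbors. -/
def IsBalanced {C S : Type*} [Fintype C] [Fintype S] (Adj : C → S → Prop)
    (x : C → S → ℝ) : Prop :=
  ∀ c s, 0 < x c s → ∀ s', Adj c s' → load x s ≤ load x s'

/-- The active neighbors `A(c)` of a client `c`: the minimum-load neighbors of `c`. -/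
noncomputable def activeN {C S : Type*} [Fintype C] [Fintype S] (Adj : C → S → Prop)
    (x : C → S → ℝ) (c : C) : Finset S :=
  Finset.univ.filter fun s => Adj c s ∧ ∀ s', Adj c s' → load x s ≤ load x s'


/-- Let `α̂` be the maximum server load of a balanced flow, `Ŝ` the servers attaining it,
and `K̂` the clients with an active neighbor in `Ŝ`. Then `N(K̂) = Ŝ` and `|K̂| = α̂·|Ŝ|`. -/
theorem stmt_2 {C S : Type*} [Fintype C] [Fintype S] [Nonempty C]
    (Adj : C → S → Prop) (x : C → S → ℝ)
    (hnb : ∀ c : C, ∃ s, Adj c s)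
    (hflow : IsServerFlow Adj x) (hbal : IsBalanced Adj x)
    (ahat : ℝ) (hub : ∀ s, load x s ≤ ahat) (hatt : ∃ s, load x s = ahat)
    (Shat : Finset S) (hShat : Shat = Finset.univ.filter fun s => load x s = ahat)
    (Khat : Finset C)
    (hKhat : Khat = Finset.univ.filter fun c => (activeN Adj x c ∩ Shat).Nonempty) :
    (Finset.univ.filter fun s => ∃ c ∈ Khat, Adj c s) = Shat ∧
    (Khat.card : ℝ) = ahat * (Shat.card : ℝ) := by

  obtain ⟨hx0, hsupp, hsum⟩ := hflow
  have hload0 : ∀ s, 0 ≤ load x s := fun s => Finset.sum_nonneg fun c _ => hx0 c s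
  have hCard : (Fintype.card C : ℝ) = ∑ s, load x s := by
    unfold load; rw [Finset.sum_comm]; simp [hsum]
  have hapos : 0 < ahat := by
    by_contra h
    push_neg at h
    have hz : ∀ s, load x s = 0 := fun s => le_antisymm (le_trans (hub s) h) (hload0 s)
    have h0 : (Fintype.card C : ℝ) = 0 := by rw [hCard]; simp [hz]
    have := Fintype.card_pos (α := C)
    rw [Nat.cast_eq_zero] at h0
    omega
  have hmem : ∀ c s, 0 < x c s → load x s = ahat → c ∈ Khat := by
    intro c s hpos hls
    have hadj : Adj c s := by
      by_contra h; rw [hsupp c s h] at hpos; exact lt_irrefl _ hpos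
    have hact : s ∈ activeN Adj x c := by
      simp only [activeN, Finset.mem_filter, Finset.mem_univ, true_and]
      exact ⟨hadj, hbal c s hpos⟩
    rw [hKhat]
    simp only [Finset.mem_filter, Finset.mem_univ, true_and]
    exact ⟨s, Finset.mem_inter.2 ⟨hact, by rw [hShat]; simp [hls]⟩⟩
  have hKnb : ∀ c ∈ Khat, ∀ s, Adj c s → load x s = ahat := by
    intro c hc s hadj
    rw [hKhat] at hc
    simp only [Finset.mem_filter, Finset.mem_univ, true_and] at hc
    obtain ⟨s0, hs0⟩ := hc
    rw [Finset.mem_inter] at hs0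
    obtain ⟨hs0a, hs0S⟩ := hs0
    simp only [activeN, Finset.mem_filter, Finset.mem_univ, true_and] at hs0a
    rw [hShat] at hs0S
    simp only [Finset.mem_filter, Finset.mem_univ, true_and] at hs0S
    exact le_antisymm (hub s) (hs0S ▸ hs0a.2 s hadj)
  have hKzero : ∀ c, c ∉ Khat → ∀ s ∈ Shat, x c s = 0 := by
    intro c hc s hs
    by_contra h
    have hpos : 0 < x c s := lt_of_le_of_ne (hx0 c s) (Ne.symm h)
    rw [hShat] at hs
    simp only [Finset.mem_filter, Finset.mem_univ, true_and] at hs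
    exact hc (hmem c s hpos hs)
  constructor
  · ext s
    simp only [Finset.mem_filter, Finset.mem_univ, true_and]
    constructor
    · rintro ⟨c, hc, hadj⟩
      rw [hShat]
      simp only [Finset.mem_filter, Finset.mem_univ, true_and]
      exact hKnb c hc s hadj
    · intro hs
      have hsl : load x s = ahat := by
        rw [hShat] at hs
        simpa using hs
      have hpos : 0 < load x s := hsl ▸ hapos
      have : ∑ c : C, (0:ℝ) < ∑ c : C, x c s := by simpa [load] using hpos
      obtain ⟨c, -, hc⟩ := Finset.exists_lt_of_sum_lt this
      exact ⟨c, hmem c s hc hsl, by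
        by_contra h; rw [hsupp c s h] at hc; exact lt_irrefl _ hc⟩
  · have hSval : ∀ s ∈ Shat, load x s = ahat := by
      intro s hs
      rw [hShat] at hs
      simpa using hs
    have h1 : ∑ s ∈ Shat, load x s = ahat * (Shat.card : ℝ) := by
      rw [Finset.sum_congr rfl hSval, Finset.sum_const, nsmul_eq_mul, mul_comm]
    have h2 : ∑ s ∈ Shat, load x s = ∑ c : C, ∑ s ∈ Shat, x c s := by
      unfold load; rw [Finset.sum_comm]
    have h3 : ∑ c : C, ∑ s ∈ Shat, x c s = ∑ c ∈ Khat, ∑ s ∈ Shat, x c s := by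
      symm
      apply Finset.sum_subset (Finset.subset_univ _)
      intro c _ hc
      exact Finset.sum_eq_zero fun s hs => hKzero c hc s hs
    have h4 : ∀ c ∈ Khat, ∑ s ∈ Shat, x c s = 1 := by
      intro c hc
      rw [← hsum c]
      apply Finset.sum_subset
      · intro s hs
        rw [hShat] at hs; exact Finset.mem_univ s
      · intro s _ hs
        by_contra h
        have hpos : 0 < x c s := lt_of_le_of_ne (hx0 c s) (Ne.symm h)
        have hadj : Adj c s := by
          by_contra ha; rw [hsupp c s ha] at hpos; exact lt_irrefl _ hpos
        apply hs
        rw [hShat]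
        simp [hKnb c hc s hadj]
    rw [← h1, h2, h3, Finset.sum_congr rfl h4]
    simp
end

section
/- Let α be a balanced server flow on G = (C ∪ S, E) and let α̂ = max_{s ∈ S} α(s). Then α̂ = max over nonempty K ⊆ C of |K|/|N(K)|. Furthermore, for any K ⊆ C with |K| = α̂ · |N(K)|, every server s ∈ N(K) satisfies α(s) = α̂. -/
open scoped Classical

lemma sum_over_NB {C S : Type*} [Fintype C] [Fintype S] (Adj : C → S → Prop) (x : C → S → ℝ)
    (hflow : IsServerFlow Adj x) (K : Finset C) :
    ∑ s ∈ NB Adj K, ∑ c ∈ K, x c s = (K.card : ℝ) := by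
  obtain ⟨hpos, hsupp, hone⟩ := hflow
  rw [Finset.sum_comm]
  have h : ∀ c ∈ K, ∑ s ∈ NB Adj K, x c s = 1 := by
    intro c hc
    rw [← hone c]
    apply Finset.sum_subset (Finset.subset_univ _)
    intro s _ hs
    apply hsupp
    intro h
    exact hs (by simp only [NB, Finset.mem_filter, Finset.mem_univ, true_and]; exact ⟨c, hc, h⟩)
  rw [Finset.sum_congr rfl h]
  simp

/-- The maximum load `α̂` of a balanced server flow equals the maximum of `|K|/|N(K)|`
over nonempty `K ⊆ C`; moreover any `K` with `|K| = α̂·|N(K)|` has `α(s) = α̂` for all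
`s ∈ N(K)`. -/
theorem stmt_3 {C S : Type*} [Fintype C] [Fintype S] [Nonempty C]
    (Adj : C → S → Prop) (x : C → S → ℝ)
    (hnb : ∀ c : C, ∃ s, Adj c s)
    (hflow : IsServerFlow Adj x) (hbal : IsBalanced Adj x)
    (ahat : ℝ) (hub : ∀ s, load x s ≤ ahat) (hatt : ∃ s, load x s = ahat) :
    IsGreatest
      {r : ℝ | ∃ K : Finset C, K.Nonempty ∧ r = (K.card : ℝ) / ((NB Adj K).card : ℝ)}
      ahat ∧
    ∀ K : Finset C, (K.card : ℝ) = ahat * ((NB Adj K).card : ℝ) →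
      ∀ s ∈ NB Adj K, load x s = ahat := by
  have hflow' := hflow
  obtain ⟨hpos, hsupp, hone⟩ := hflow
  have hload_nonneg : ∀ s, 0 ≤ load x s :=
    fun s => Finset.sum_nonneg fun c _ => hpos c s
  have htot : ∑ s, load x s = (Fintype.card C : ℝ) := by
    simp only [load]
    rw [Finset.sum_comm]
    simp [hone]
  have hapos : 0 < ahat := by
    by_contra h
    push_neg at h
    have h1 : ∑ s, load x s ≤ 0 := Finset.sum_nonpos fun s _ => (hub s).trans h
    rw [htot] at h1
    have h2 : (0:ℝ) < (Fintype.card C : ℝ) := by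
      exact_mod_cast Fintype.card_pos
    linarith
  have hNBne : ∀ K : Finset C, K.Nonempty → (NB Adj K).Nonempty := by
    rintro K ⟨c, hc⟩
    obtain ⟨s, hs⟩ := hnb c
    exact ⟨s, by simp only [NB, Finset.mem_filter, Finset.mem_univ, true_and]; exact ⟨c, hc, hs⟩⟩
  have key : ∀ K : Finset C, (K.card : ℝ) ≤ ∑ s ∈ NB Adj K, load x s := by
    intro K
    rw [← sum_over_NB Adj x hflow' K]
    apply Finset.sum_le_sum
    intro s _
    exact Finset.sum_le_sum_of_subset_of_nonneg (Finset.subset_univ K)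
      (fun c _ _ => hpos c s)
  -- upper bound
  have hub' : ∀ K : Finset C, K.Nonempty → (K.card:ℝ)/((NB Adj K).card:ℝ) ≤ ahat := by
    intro K hK
    have hcard : (0:ℝ) < ((NB Adj K).card:ℝ) := by
      exact_mod_cast Finset.card_pos.mpr (hNBne K hK)
    rw [div_le_iff₀ hcard]
    calc (K.card:ℝ) ≤ ∑ s ∈ NB Adj K, load x s := key K
      _ ≤ ∑ _s ∈ NB Adj K, ahat := Finset.sum_le_sum fun s _ => hub s
      _ = ahat * ((NB Adj K).card:ℝ) := by
          rw [Finset.sum_const, nsmul_eq_mul, mul_comm]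
  -- attainment
  set K₀ : Finset C := Finset.univ.filter (fun c => ∀ s', Adj c s' → load x s' = ahat) with hK₀def
  have hmemK₀ : ∀ c, c ∈ K₀ ↔ ∀ s', Adj c s' → load x s' = ahat := by
    intro c; simp [hK₀def]
  obtain ⟨s₀, hs₀⟩ := hatt
  have hc₀ : ∃ c, 0 < x c s₀ := by
    by_contra h
    push_neg at h
    have : load x s₀ ≤ 0 := Finset.sum_nonpos fun c _ => h c
    rw [hs₀] at this
    linarith
  obtain ⟨c₀, hc₀⟩ := hc₀
  have hK₀ne : K₀.Nonempty := by
    refine ⟨c₀, (hmemK₀ c₀).mpr ?_⟩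
    intro s' hs'
    exact le_antisymm (hub s') (hs₀ ▸ hbal c₀ s₀ hc₀ s' hs')
  have hNBK₀ : ∀ s ∈ NB Adj K₀, load x s = ahat := by
    intro s hs
    simp only [NB, Finset.mem_filter, Finset.mem_univ, true_and] at hs
    obtain ⟨c, hc, hadj⟩ := hs
    exact (hmemK₀ c).mp hc s hadj
  have honly : ∀ s ∈ NB Adj K₀, ∀ c, c ∉ K₀ → x c s = 0 := by
    intro s hs c hc
    by_contra h
    have hx : 0 < x c s := lt_of_le_of_ne (hpos c s) (Ne.symm h)
    apply hc
    rw [hmemK₀]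
    intro s' hs'
    refine le_antisymm (hub s') ?_
    have := hbal c s hx s' hs'
    rw [hNBK₀ s hs] at this
    exact this
  have hsumK₀ : ∑ s ∈ NB Adj K₀, load x s = (K₀.card : ℝ) := by
    rw [← sum_over_NB Adj x hflow' K₀]
    apply Finset.sum_congr rfl
    intro s hs
    simp only [load]
    exact (Finset.sum_subset (Finset.subset_univ K₀)
      (fun c _ hc => honly s hs c hc)).symm
  have hcardNB : (0:ℝ) < ((NB Adj K₀).card:ℝ) := by
    exact_mod_cast Finset.card_pos.mpr (hNBne K₀ hK₀ne)
  have hattain : ahat = (K₀.card : ℝ) / ((NB Adj K₀).card : ℝ) := by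
    rw [eq_div_iff (ne_of_gt hcardNB)]
    rw [← hsumK₀]
    rw [Finset.sum_congr rfl hNBK₀, Finset.sum_const, nsmul_eq_mul, mul_comm]
  refine ⟨⟨⟨K₀, hK₀ne, hattain⟩, ?_⟩, ?_⟩
  · rintro r ⟨K, hK, rfl⟩
    exact hub' K hK
  · intro K hK s hs
    have hsumN : ∑ s ∈ NB Adj K, load x s = ahat * ((NB Adj K).card:ℝ) := by
      refine le_antisymm ?_ ?_
      · calc ∑ s ∈ NB Adj K, load x s ≤ ∑ _s ∈ NB Adj K, ahat :=
              Finset.sum_le_sum fun s _ => hub s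
          _ = ahat * ((NB Adj K).card:ℝ) := by
              rw [Finset.sum_const, nsmul_eq_mul, mul_comm]
      · rw [← hK]; exact key K
    have hzero : ∑ s ∈ NB Adj K, (ahat - load x s) = 0 := by
      rw [Finset.sum_sub_distrib, Finset.sum_const, nsmul_eq_mul, mul_comm, hsumN, sub_self]
    have := (Finset.sum_eq_zero_iff_of_nonneg
      (fun s _ => sub_nonneg.mpr (hub s))).mp hzero s hs
    linarith
end

section
/- If max over nonempty K ⊆ C of |K|/|N(K)| equals |C|/|S|, then there is a unique balanced server flow, namely the one with α(s) = |C|/|S| for every s ∈ S. -/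
open scoped Classical

/-- If each value is at most `M` and the sum equals `card * M`, all values equal `M`. -/
lemma all_eq_of_le_of_sum {S : Type*} [Fintype S] (L : S → ℝ) (M : ℝ)
    (h : ∀ s, L s ≤ M) (hsum : ∑ s, L s = (Fintype.card S : ℝ) * M) : ∀ s, L s = M := by
  have hz : ∑ s, (M - L s) = 0 := by
    rw [Finset.sum_sub_distrib, Finset.sum_const, Finset.card_univ, hsum]
    simp [nsmul_eq_mul]
  have := (Finset.sum_eq_zero_iff_of_nonneg (fun s _ => by linarith [h s])).1 hz
  intro s; have := this s (Finset.mem_univ s); linarith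

lemma sum_loads {C S : Type*} [Fintype C] [Fintype S] (Adj : C → S → Prop)
    (x : C → S → ℝ) (hx : IsServerFlow Adj x) :
    ∑ s, load x s = (Fintype.card C : ℝ) := by
  unfold load
  rw [Finset.sum_comm]
  simp [hx.2.2, Finset.card_univ]

/-- If the maximum of `|K|/|N(K)|` over nonempty `K ⊆ C` equals `|C|/|S|`, then a
balanced server flow exists, every balanced server flow has `α(s) = |C|/|S|` for all
`s`, and in particular the balanced load function is unique. -/
theorem stmt_4 {C S : Type*} [Fintype C] [Fintype S] [Nonempty C]
    (Adj : C → S → Prop)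
    (hnb : ∀ c : C, ∃ s, Adj c s)
    (hmax : IsGreatest
      {r : ℝ | ∃ K : Finset C, K.Nonempty ∧ r = (K.card : ℝ) / ((NB Adj K).card : ℝ)}
      ((Fintype.card C : ℝ) / (Fintype.card S : ℝ))) :
    (∃ x : C → S → ℝ, IsServerFlow Adj x ∧ IsBalanced Adj x) ∧
    (∀ x : C → S → ℝ, IsServerFlow Adj x → IsBalanced Adj x →
      ∀ s, load x s = (Fintype.card C : ℝ) / (Fintype.card S : ℝ)) := by
  have hSne : Nonempty S := ⟨(hnb (Classical.arbitrary C)).choose⟩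
  set nC := Fintype.card C with hnC
  set nS := Fintype.card S with hnS
  have hnC0 : 0 < nC := Fintype.card_pos
  have hnS0 : 0 < nS := Fintype.card_pos
  have hnCr : (0:ℝ) < nC := by exact_mod_cast hnC0
  have hnSr : (0:ℝ) < nS := by exact_mod_cast hnS0
  -- NB of a nonempty set is nonempty
  have hNBne : ∀ K : Finset C, K.Nonempty → 0 < (NB Adj K).card := by
    intro K ⟨c, hc⟩
    obtain ⟨s, hs⟩ := hnb c
    exact Finset.card_pos.2 ⟨s, Finset.mem_filter.2 ⟨Finset.mem_univ _, c, hc, hs⟩⟩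
  -- the Hall-type counting bound
  have hbound : ∀ K : Finset C, K.Nonempty → K.card * nS ≤ (NB Adj K).card * nC := by
    intro K hK
    have h1 : (K.card : ℝ) / ((NB Adj K).card : ℝ) ≤ (nC : ℝ) / nS :=
      hmax.2 ⟨K, hK, rfl⟩
    have hNB : (0:ℝ) < (NB Adj K).card := by exact_mod_cast hNBne K hK
    rw [div_le_div_iff₀ hNB hnSr] at h1
    have h2 : K.card * nS ≤ nC * (NB Adj K).card := by exact_mod_cast h1
    rw [mul_comm ((NB Adj K).card) nC]
    exact h2
  -- KEY uniqueness statement (also used to show the constructed flow is balanced)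
  have huniq : ∀ x : C → S → ℝ, IsServerFlow Adj x → IsBalanced Adj x →
      ∀ s, load x s = (nC : ℝ) / nS := by
    intro x hsf hb
    obtain ⟨s₀, -, hs₀⟩ := Finset.exists_max_image Finset.univ (load x) Finset.univ_nonempty
    set M := load x s₀ with hM
    have hle : ∀ s, load x s ≤ M := fun s => hs₀ s (Finset.mem_univ s)
    have hsum := sum_loads Adj x hsf
    have hMavg : (nC : ℝ) / nS ≤ M := by
      rw [div_le_iff₀ hnSr]
      calc (nC:ℝ) = ∑ s, load x s := hsum.symm
        _ ≤ ∑ _s : S, M := Finset.sum_le_sum fun s _ => hle s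
        _ = M * nS := by rw [Finset.sum_const, Finset.card_univ, nsmul_eq_mul, mul_comm]
    set T : Finset S := Finset.univ.filter (fun s => load x s = M) with hT
    set K : Finset C := Finset.univ.filter (fun c => ∃ s ∈ T, 0 < x c s) with hK
    have hMpos : 0 < M := lt_of_lt_of_le (div_pos hnCr hnSr) hMavg
    -- adjacency from positive flow
    have hadj : ∀ c s, 0 < x c s → Adj c s := by
      intro c s h
      by_contra hA
      rw [hsf.2.1 c s hA] at h; exact lt_irrefl 0 h
    -- all flow from clients of K goes to T; flow to T comes only from K
    have hflowT : ∀ c ∈ K, ∀ s, 0 < x c s → s ∈ T := by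
      intro c hc s hxs
      obtain ⟨t, ht, hxt⟩ := (Finset.mem_filter.1 hc).2
      have h1 : load x t ≤ load x s := hb c t hxt s (hadj c s hxs)
      have h2 : load x t = M := (Finset.mem_filter.1 ht).2
      exact Finset.mem_filter.2 ⟨Finset.mem_univ _, le_antisymm (hle s) (h2 ▸ h1)⟩
    -- NB K ⊆ T
    have hNBsub : NB Adj K ⊆ T := by
      intro s hs
      obtain ⟨c, hc, hcs⟩ := (Finset.mem_filter.1 hs).2
      obtain ⟨t, ht, hxt⟩ := (Finset.mem_filter.1 hc).2
      have h1 : load x t ≤ load x s := hb c t hxt s hcs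
      have h2 : load x t = M := (Finset.mem_filter.1 ht).2
      exact Finset.mem_filter.2 ⟨Finset.mem_univ _, le_antisymm (hle s) (h2 ▸ h1)⟩
    -- sum of loads over T equals |K|
    have hsumT : ∑ s ∈ T, load x s = (K.card : ℝ) := by
      have : ∑ s ∈ T, load x s = ∑ c, ∑ s ∈ T, x c s := by
        unfold load; rw [Finset.sum_comm]
      rw [this]
      have hsplit : ∀ c : C, ∑ s ∈ T, x c s = if c ∈ K then 1 else 0 := by
        intro c
        by_cases hc : c ∈ K
        · simp only [hc, if_true]
          rw [← hsf.2.2 c]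
          apply Finset.sum_subset (Finset.subset_univ T)
          intro s _ hsT
          by_contra h
          have hpos : 0 < x c s := lt_of_le_of_ne (hsf.1 c s) (Ne.symm h)
          exact hsT (hflowT c hc s hpos)
        · simp only [hc, if_false]
          apply Finset.sum_eq_zero
          intro s hs
          by_contra h
          have hpos : 0 < x c s := lt_of_le_of_ne (hsf.1 c s) (Ne.symm h)
          exact hc (Finset.mem_filter.2 ⟨Finset.mem_univ _, s, hs, hpos⟩)
      simp [hsplit]
    have hsumT' : ∑ s ∈ T, load x s = (T.card : ℝ) * M := by
      rw [Finset.sum_congr rfl (fun s hs => (Finset.mem_filter.1 hs).2)]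
      rw [Finset.sum_const, nsmul_eq_mul]
    -- K nonempty
    have hTne : s₀ ∈ T := Finset.mem_filter.2 ⟨Finset.mem_univ _, rfl⟩
    have hKne : K.Nonempty := by
      have hload : 0 < load x s₀ := hMpos
      have : ∃ c, 0 < x c s₀ := by
        by_contra h
        push_neg at h
        have : load x s₀ ≤ 0 := by
          unfold load
          apply Finset.sum_nonpos
          intro c _
          exact le_of_eq (le_antisymm (h c) (hsf.1 c s₀))
        linarith
      obtain ⟨c, hc⟩ := this
      exact ⟨c, Finset.mem_filter.2 ⟨Finset.mem_univ _, s₀, hTne, hc⟩⟩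
    -- M * |T| = |K|,  |NB K| ≤ |T|
    have hKT : (K.card : ℝ) = T.card * M := by rw [← hsumT, hsumT']
    have hcard : (NB Adj K).card ≤ T.card := Finset.card_le_card hNBsub
    have hNBpos : (0:ℝ) < (NB Adj K).card := by exact_mod_cast hNBne K hKne
    have hTpos : (0:ℝ) < T.card := lt_of_lt_of_le hNBpos (by exact_mod_cast hcard)
    have hMle : M ≤ (K.card : ℝ) / (NB Adj K).card := by
      rw [le_div_iff₀ hNBpos, hKT]
      have : ((NB Adj K).card : ℝ) ≤ T.card := by exact_mod_cast hcard
      nlinarith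
    have hKNB : (K.card : ℝ) / (NB Adj K).card ≤ (nC:ℝ)/nS := hmax.2 ⟨K, hKne, rfl⟩
    have hMeq : M = (nC:ℝ)/nS := le_antisymm (le_trans hMle hKNB) hMavg
    -- all loads at most M, sum = nC = nS * M, so all equal
    apply all_eq_of_le_of_sum (load x) ((nC:ℝ)/nS) (fun s => hMeq ▸ hle s)
    rw [hsum, ← hnS, ← hnC]
    field_simp
  refine ⟨?_, fun x hsf hb => huniq x hsf hb⟩
  -- EXISTENCE via Hall on a blow-up
  set t : C × Fin nS → Finset (S × Fin nC) :=
    fun p => Finset.univ.filter fun q => Adj p.1 q.1 with ht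
  have hall : ∀ s : Finset (C × Fin nS), s.card ≤ (s.biUnion t).card := by
    intro s
    rcases s.eq_empty_or_nonempty with rfl | hs
    · simp
    set K : Finset C := s.image Prod.fst with hKdef
    have hKne : K.Nonempty := hs.image _
    have h1 : s.card ≤ K.card * nS := by
      have : s ⊆ K ×ˢ Finset.univ := by
        intro p hp
        exact Finset.mem_product.2 ⟨Finset.mem_image_of_mem _ hp, Finset.mem_univ _⟩
      calc s.card ≤ (K ×ˢ (Finset.univ : Finset (Fin nS))).card := Finset.card_le_card this
        _ = K.card * nS := by simp [Finset.card_product]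
    have h2 : s.biUnion t = (NB Adj K) ×ˢ (Finset.univ : Finset (Fin nC)) := by
      ext q
      simp only [Finset.mem_biUnion, ht, Finset.mem_filter, Finset.mem_univ, true_and,
        Finset.mem_product, NB, hKdef, Finset.mem_image, and_true]
      constructor
      · rintro ⟨p, hp, hA⟩; exact ⟨p.1, ⟨p, hp, rfl⟩, hA⟩
      · rintro ⟨c, ⟨p, hp, rfl⟩, hA⟩; exact ⟨p, hp, hA⟩
    rw [h2]
    calc s.card ≤ K.card * nS := h1
      _ ≤ (NB Adj K).card * nC := hbound K hKne
      _ = ((NB Adj K) ×ˢ (Finset.univ : Finset (Fin nC))).card := by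
          simp [Finset.card_product]
  obtain ⟨f, hfinj, hft⟩ := (Finset.all_card_le_biUnion_card_iff_exists_injective t).1 hall
  have hfadj : ∀ p : C × Fin nS, Adj p.1 (f p).1 := by
    intro p
    have := hft p
    simp only [ht, Finset.mem_filter] at this
    exact this.2
  set x : C → S → ℝ := fun c s =>
    (∑ i : Fin nS, if (f (c, i)).1 = s then (1:ℝ) else 0) / nS with hx
  have hnonneg : ∀ c s, 0 ≤ x c s := by
    intro c s
    apply div_nonneg _ (le_of_lt hnSr)
    apply Finset.sum_nonneg
    intro i _
    split <;> norm_num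
  have hsupp : ∀ c s, ¬ Adj c s → x c s = 0 := by
    intro c s hA
    simp only [hx]
    rw [div_eq_zero_iff]
    left
    apply Finset.sum_eq_zero
    intro i _
    rw [if_neg]
    intro h
    exact hA (h ▸ hfadj (c, i))
  have hone : ∀ c, ∑ s, x c s = 1 := by
    intro c
    simp only [hx]
    rw [← Finset.sum_div]
    rw [Finset.sum_comm]
    have : ∀ i : Fin nS, ∑ s, (if (f (c, i)).1 = s then (1:ℝ) else 0) = 1 := by
      intro i
      simp [Finset.sum_ite_eq]
    rw [Finset.sum_congr rfl fun i _ => this i]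
    simp [div_self (ne_of_gt hnSr)]
  have hsf : IsServerFlow Adj x := ⟨hnonneg, hsupp, hone⟩
  -- loads are bounded by nC/nS
  have hloadle : ∀ s, load x s ≤ (nC:ℝ)/nS := by
    intro s
    unfold load
    simp only [hx]
    rw [← Finset.sum_div, div_le_div_iff₀ hnSr hnSr]
    have hswap : ∑ c, ∑ i : Fin nS, (if (f (c, i)).1 = s then (1:ℝ) else 0)
        = ∑ p : C × Fin nS, (if (f p).1 = s then (1:ℝ) else 0) := by
      rw [Fintype.sum_prod_type]
    rw [hswap, Finset.sum_boole]
    have hcard : (Finset.univ.filter fun p : C × Fin nS => (f p).1 = s).card ≤ nC := by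
      have := Finset.card_le_card_of_injOn (fun p => (f p).2)
        (s := Finset.univ.filter fun p : C × Fin nS => (f p).1 = s)
        (t := (Finset.univ : Finset (Fin nC)))
        (fun a _ => Finset.mem_univ _)
        (by
          intro p hp q hq hpq
          simp only [Finset.coe_filter, Set.mem_setOf_eq] at hp hq
          apply hfinj
          exact Prod.ext (hp.2.trans hq.2.symm) hpq)
      simpa using this
    have : ((Finset.univ.filter fun p : C × Fin nS => (f p).1 = s).card : ℝ) ≤ nC := by
      exact_mod_cast hcard
    nlinarith
  have hconst : ∀ s, load x s = (nC:ℝ)/nS := by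
    apply all_eq_of_le_of_sum (load x) ((nC:ℝ)/nS) hloadle
    rw [sum_loads Adj x hsf, ← hnS, ← hnC]
    field_simp
  exact ⟨x, hsf, fun c s _ s' _ => by rw [hconst s, hconst s']⟩
end

section
/- A finite bipartite graph G = (C ∪ S, E) admits a balanced server flow with uniquely determined server loads α if and only if every client has at least one neighbor. -/
open scoped Classical

section Aux

variable {C S : Type*} [Fintype C] [Fintype S]

/-- The potential function: sum of squared loads. -/
noncomputable def Fpot (x : C → S → ℝ) : ℝ := ∑ s, (load x s) ^ 2

lemma load_continuous (s : S) : Continuous fun x : C → S → ℝ => load x s := by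
  unfold load
  exact continuous_finset_sum _ fun c _ => (continuous_apply s).comp (continuous_apply c)

lemma Fpot_continuous : Continuous (Fpot : (C → S → ℝ) → ℝ) := by
  unfold Fpot
  exact continuous_finset_sum _ fun s _ => (load_continuous s).pow 2

/-- For a balanced flow `x`, the weighted load `∑ s, load x s * x c s` is at most the load
of any neighbor of `c`. -/
lemma weighted_le {Adj : C → S → Prop} {x : C → S → ℝ}
    (hx : IsServerFlow Adj x) (hb : IsBalanced Adj x) (c : C) {s' : S} (hs' : Adj c s') :
    ∑ s, load x s * x c s ≤ load x s' := by
  calc ∑ s, load x s * x c s ≤ ∑ s, load x s' * x c s := by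
        apply Finset.sum_le_sum
        intro s _
        rcases lt_or_eq_of_le (hx.1 c s) with h | h
        · exact mul_le_mul_of_nonneg_right (hb c s h s' hs') (le_of_lt h)
        · rw [← h, mul_zero, mul_zero]
    _ = load x s' := by rw [← Finset.mul_sum, hx.2.2 c, mul_one]

/-- A balanced flow minimizes the potential among all server flows. -/
lemma balanced_min {Adj : C → S → Prop} {x y : C → S → ℝ}
    (hx : IsServerFlow Adj x) (hb : IsBalanced Adj x) (hy : IsServerFlow Adj y) :
    Fpot x ≤ Fpot y := by
  have key : ∀ c : C, ∑ s, load x s * x c s ≤ ∑ s, load x s * y c s := by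
    intro c
    set M := ∑ s, load x s * x c s with hM
    calc M = M * ∑ s, y c s := by rw [hy.2.2 c, mul_one]
      _ = ∑ s, M * y c s := Finset.mul_sum _ _ _
      _ ≤ ∑ s, load x s * y c s := by
          apply Finset.sum_le_sum
          intro s _
          by_cases hA : Adj c s
          · exact mul_le_mul_of_nonneg_right (weighted_le hx hb c hA) (hy.1 c s)
          · rw [hy.2.1 c s hA, mul_zero, mul_zero]
  have h1 : ∑ s, load x s * load x s ≤ ∑ s, load x s * load y s := by
    have lx : ∀ s : S, load x s * load x s = ∑ c, load x s * x c s := by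
      intro s; rw [← Finset.mul_sum]; rfl
    have ly : ∀ s : S, load x s * load y s = ∑ c, load x s * y c s := by
      intro s; rw [← Finset.mul_sum]; rfl
    simp only [lx, ly]
    rw [Finset.sum_comm (f := fun s c => load x s * x c s),
      Finset.sum_comm (f := fun s c => load x s * y c s)]
    exact Finset.sum_le_sum fun c _ => key c
  have h2 : ∀ s : S, (load x s) ^ 2 ≤
      (load y s) ^ 2 + 2 * (load x s * load x s - load x s * load y s) := by
    intro s
    nlinarith [sq_nonneg (load x s - load y s)]
  have h3 : Fpot x ≤ Fpot y +
      2 * ((∑ s, load x s * load x s) - ∑ s, load x s * load y s) := by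
    unfold Fpot
    calc ∑ s, (load x s) ^ 2
        ≤ ∑ s, ((load y s) ^ 2 + 2 * (load x s * load x s - load x s * load y s)) :=
          Finset.sum_le_sum fun s _ => h2 s
      _ = (∑ s, (load y s) ^ 2) +
          2 * ((∑ s, load x s * load x s) - ∑ s, load x s * load y s) := by
          rw [Finset.sum_add_distrib, ← Finset.mul_sum, Finset.sum_sub_distrib]
  linarith [h3, h1]

/-- The midpoint of two server flows is a server flow. -/
lemma midpoint_flow {Adj : C → S → Prop} {x y : C → S → ℝ}
    (hx : IsServerFlow Adj x) (hy : IsServerFlow Adj y) :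
    IsServerFlow Adj (fun c s => (x c s + y c s) / 2) := by
  refine ⟨fun c s => by have := hx.1 c s; have := hy.1 c s; linarith,
    fun c s h => by show (x c s + y c s) / 2 = 0; rw [hx.2.1 c s h, hy.2.1 c s h]; ring,
    fun c => ?_⟩
  have : ∑ s, (x c s + y c s) / 2 = ((∑ s, x c s) + ∑ s, y c s) / 2 := by
    rw [← Finset.sum_add_distrib, Finset.sum_div]
  rw [this, hx.2.2 c, hy.2.2 c]; norm_num

/-- Two balanced flows have the same loads. -/
lemma loads_unique {Adj : C → S → Prop} {x y : C → S → ℝ}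
    (hx : IsServerFlow Adj x) (hbx : IsBalanced Adj x)
    (hy : IsServerFlow Adj y) (hby : IsBalanced Adj y) (s : S) :
    load x s = load y s := by
  set z : C → S → ℝ := fun c s => (x c s + y c s) / 2 with hz
  have hzf : IsServerFlow Adj z := midpoint_flow hx hy
  have hloadz : ∀ t, load z t = (load x t + load y t) / 2 := by
    intro t
    simp only [load, hz, ← Finset.sum_add_distrib, Finset.sum_div]
  have h1 : Fpot x ≤ Fpot z := balanced_min hx hbx hzf
  have h2 : Fpot x = Fpot y := le_antisymm (balanced_min hx hbx hy) (balanced_min hy hby hx)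
  have h3 : ∑ t, (load x t - load y t) ^ 2 ≤ 0 := by
    have e : ∑ t, (load x t - load y t) ^ 2
        = 2 * Fpot x + 2 * Fpot y - 4 * Fpot z := by
      unfold Fpot
      rw [Finset.mul_sum, Finset.mul_sum, Finset.mul_sum, ← Finset.sum_add_distrib,
        ← Finset.sum_sub_distrib]
      apply Finset.sum_congr rfl
      intro t _
      rw [hloadz t]; ring
    rw [e]; nlinarith [h1, h2]
  have hnn : (0:ℝ) ≤ ∑ t, (load x t - load y t) ^ 2 :=
    Finset.sum_nonneg fun t _ => sq_nonneg _
  have hz0 : ∑ t, (load x t - load y t) ^ 2 = 0 := le_antisymm h3 hnn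
  have h4 := (Finset.sum_eq_zero_iff_of_nonneg fun t _ => sq_nonneg
    (load x t - load y t)).mp hz0 s (Finset.mem_univ s)
  have h5 := sq_eq_zero_iff.mp h4
  linarith [h5]

/-- The set of server flows is compact. -/
lemma flows_compact (Adj : C → S → Prop) :
    IsCompact {x : C → S → ℝ | IsServerFlow Adj x} := by
  have hsub : {x : C → S → ℝ | IsServerFlow Adj x} ⊆
      Set.univ.pi fun _ : C => Set.univ.pi fun _ : S => Set.Icc (0:ℝ) 1 := by
    intro x hx c _ s _
    refine ⟨hx.1 c s, ?_⟩
    calc x c s ≤ ∑ t, x c t := Finset.single_le_sum (fun t _ => hx.1 c t) (Finset.mem_univ s)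
      _ = 1 := hx.2.2 c
  have hcomp : IsCompact (Set.univ.pi fun _ : C => Set.univ.pi fun _ : S => Set.Icc (0:ℝ) 1) :=
    isCompact_univ_pi fun _ => isCompact_univ_pi fun _ => isCompact_Icc
  apply IsCompact.of_isClosed_subset hcomp ?_ hsub
  have h1 : IsClosed {x : C → S → ℝ | ∀ c s, 0 ≤ x c s} := by
    have e : {x : C → S → ℝ | ∀ c s, 0 ≤ x c s} = ⋂ c, ⋂ s, {x | 0 ≤ x c s} := by
      ext x; simp
    rw [e]
    exact isClosed_iInter fun c => isClosed_iInter fun s =>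
      isClosed_le continuous_const ((continuous_apply s).comp (continuous_apply c))
  have h2 : IsClosed {x : C → S → ℝ | ∀ c s, ¬ Adj c s → x c s = 0} := by
    have e : {x : C → S → ℝ | ∀ c s, ¬ Adj c s → x c s = 0} =
        ⋂ c, ⋂ s, ⋂ (_ : ¬ Adj c s), {x | x c s = 0} := by
      ext x; simp
    rw [e]
    exact isClosed_iInter fun c => isClosed_iInter fun s => isClosed_iInter fun _ =>
      isClosed_eq ((continuous_apply s).comp (continuous_apply c)) continuous_const
  have h3 : IsClosed {x : C → S → ℝ | ∀ c, ∑ s, x c s = 1} := by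
    have e : {x : C → S → ℝ | ∀ c, ∑ s, x c s = 1} = ⋂ c, {x | ∑ s, x c s = 1} := by
      ext x; simp
    rw [e]
    exact isClosed_iInter fun c => isClosed_eq
      (continuous_finset_sum _ fun s _ => (continuous_apply s).comp (continuous_apply c))
      continuous_const
  have e : {x : C → S → ℝ | IsServerFlow Adj x} =
      {x : C → S → ℝ | ∀ c s, 0 ≤ x c s} ∩ ({x | ∀ c s, ¬ Adj c s → x c s = 0} ∩
        {x | ∀ c, ∑ s, x c s = 1}) := by
    ext x; exact Iff.rfl
  rw [e]
  exact h1.inter (h2.inter h3)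

/-- A minimizer of the potential among server flows is balanced. -/
lemma min_balanced {Adj : C → S → Prop} {x : C → S → ℝ}
    (hx : IsServerFlow Adj x)
    (hmin : ∀ y : C → S → ℝ, IsServerFlow Adj y → Fpot x ≤ Fpot y) :
    IsBalanced Adj x := by
  intro c s hpos s' hs'
  by_contra hlt
  push_neg at hlt
  have hAdj : Adj c s := by
    by_contra h
    rw [hx.2.1 c s h] at hpos
    exact lt_irrefl 0 hpos
  have hne : s ≠ s' := by rintro rfl; exact lt_irrefl _ hlt
  set ε : ℝ := min (x c s) ((load x s - load x s') / 2) with hε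
  have hεpos : 0 < ε := lt_min hpos (by linarith)
  have hεle : ε ≤ x c s := min_le_left _ _
  have hεle2 : ε ≤ (load x s - load x s') / 2 := min_le_right _ _
  set δ : S → ℝ := fun t => (if t = s then -ε else 0) + (if t = s' then ε else 0) with hδ
  set y : C → S → ℝ := fun c' t => x c' t + (if c' = c then δ t else 0) with hy
  have hδsum : ∑ t, δ t = 0 := by
    simp only [hδ, Finset.sum_add_distrib, Finset.sum_ite_eq', Finset.mem_univ, if_true]
    ring
  have hyflow : IsServerFlow Adj y := by
    refine ⟨?_, ?_, ?_⟩
    · intro c' t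
      simp only [hy]
      by_cases h : c' = c
      · subst h
        rw [if_pos rfl]
        simp only [hδ]
        by_cases h1 : t = s
        · subst h1
          rw [if_pos rfl, if_neg hne]
          linarith [hεle]
        · rw [if_neg h1]
          by_cases h2 : t = s'
          · subst h2; rw [if_pos rfl]; linarith [hx.1 c' t]
          · rw [if_neg h2]; simpa using hx.1 c' t
      · rw [if_neg h, add_zero]; exact hx.1 c' t
    · intro c' t hA
      simp only [hy]
      by_cases h : c' = c
      · subst h
        rw [if_pos rfl, hx.2.1 c' t hA]
        simp only [hδ]
        have h1 : t ≠ s := by rintro rfl; exact hA hAdj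
        have h2 : t ≠ s' := by rintro rfl; exact hA hs'
        simp only [if_neg h1, if_neg h2]; ring
      · rw [if_neg h, add_zero]; exact hx.2.1 c' t hA
    · intro c'
      simp only [hy, Finset.sum_add_distrib, hx.2.2 c']
      by_cases h : c' = c
      · subst h; simp [hδsum]
      · simp [h]
  have hloady : ∀ t, load y t = load x t + δ t := by
    intro t
    simp only [load, hy, Finset.sum_add_distrib, Finset.sum_ite_eq', Finset.mem_univ, if_true]
  have hFy : Fpot y < Fpot x := by
    have e : ∀ t, (load y t) ^ 2 = (load x t) ^ 2 +
        ((if t = s then ε ^ 2 - 2 * ε * load x s else 0) +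
         (if t = s' then ε ^ 2 + 2 * ε * load x s' else 0)) := by
      intro t
      rw [hloady t]
      simp only [hδ]
      by_cases h1 : t = s
      · subst h1
        rw [if_pos rfl, if_pos rfl, if_neg hne, if_neg hne]
        ring
      · rw [if_neg h1, if_neg h1]
        by_cases h2 : t = s'
        · subst h2
          rw [if_pos rfl, if_pos rfl]
          ring
        · rw [if_neg h2, if_neg h2]
          ring
    unfold Fpot
    simp only [e, Finset.sum_add_distrib, Finset.sum_ite_eq', Finset.mem_univ, if_true]
    have : ε ^ 2 - 2 * ε * load x s + (ε ^ 2 + 2 * ε * load x s') < 0 := by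
      nlinarith [hεpos, hεle2]
    linarith
  exact absurd (hmin y hyflow) (not_le.mpr hFy)

end Aux

/-- A finite bipartite graph admits a balanced server flow with uniquely determined
server loads if and only if every client has at least one neighbor. -/
theorem stmt_5 {C S : Type*} [Fintype C] [Fintype S]
    (Adj : C → S → Prop) :
    ((∃ x : C → S → ℝ, IsServerFlow Adj x ∧ IsBalanced Adj x) ∧
     (∀ x y : C → S → ℝ, IsServerFlow Adj x → IsBalanced Adj x →
        IsServerFlow Adj y → IsBalanced Adj y → ∀ s, load x s = load y s))
    ↔ (∀ c : C, ∃ s, Adj c s) := by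
  constructor
  · rintro ⟨⟨x, hx, -⟩, -⟩ c
    by_contra h
    push_neg at h
    have h0 : ∑ s, x c s = 0 := Finset.sum_eq_zero fun s _ => hx.2.1 c s (h s)
    rw [hx.2.2 c] at h0
    norm_num at h0
  · intro hN
    have hne : {x : C → S → ℝ | IsServerFlow Adj x}.Nonempty := by
      refine ⟨fun c s => if s = Classical.choose (hN c) then 1 else 0, fun c s => ?_, ?_, ?_⟩
      · show (0:ℝ) ≤ if s = Classical.choose (hN c) then 1 else 0
        split <;> norm_num
      · intro c s hA
        by_cases h : s = Classical.choose (hN c)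
        · exact absurd (h ▸ Classical.choose_spec (hN c)) hA
        · show (if s = Classical.choose (hN c) then (1:ℝ) else 0) = 0
          simp [h]
      · intro c
        show ∑ s, (if s = Classical.choose (hN c) then (1:ℝ) else 0) = 1
        simp
    obtain ⟨x, hxmem, hxmin⟩ :=
      (flows_compact Adj).exists_isMinOn hne (Fpot_continuous.continuousOn)
    have hxbal : IsBalanced Adj x := min_balanced hxmem fun y hy => hxmin hy
    exact ⟨⟨x, hxmem, hxbal⟩, fun a b ha hba hb hbb s => loads_unique ha hba hb hbb s⟩
end

section
/- Any balanced server flow minimizes the sum of squared server loads ∑_{s ∈ S} α(s)² among all server flows; consequently the load vector of a balanced server flow is unique. -/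
open scoped Classical

lemma key_ineq {C S : Type*} [Fintype C] [Fintype S]
    (Adj : C → S → Prop) (x xstar : C → S → ℝ)
    (hflow : IsServerFlow Adj x) (hbal : IsBalanced Adj x)
    (hstar : IsServerFlow Adj xstar) :
    ∑ s, (load x s) ^ 2 ≤ ∑ s, load x s * load xstar s := by
  obtain ⟨hx0, hxadj, hx1⟩ := hflow
  obtain ⟨hy0, hyadj, hy1⟩ := hstar
  have hL : ∑ s, (load x s) ^ 2 = ∑ c, ∑ s, x c s * load x s := by
    rw [Finset.sum_comm]
    refine Finset.sum_congr rfl fun s _ => ?_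
    rw [pow_two, load, Finset.sum_mul]
  have hR : ∑ s, load x s * load xstar s = ∑ c, ∑ s, xstar c s * load x s := by
    rw [Finset.sum_comm]
    refine Finset.sum_congr rfl fun s _ => ?_
    rw [mul_comm, show load xstar s = ∑ c, xstar c s from rfl, Finset.sum_mul]
  rw [hL, hR]
  refine Finset.sum_le_sum fun c _ => ?_
  -- pick s0 with x c s0 > 0
  have : ∃ s0, x c s0 ≠ 0 := by
    by_contra h
    push_neg at h
    have := hx1 c
    simp [h] at this
  obtain ⟨s0, hs0⟩ := this
  have hs0pos : 0 < x c s0 := lt_of_le_of_ne (hx0 c s0) (Ne.symm hs0)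
  have hadj0 : Adj c s0 := by
    by_contra h; exact hs0 (hxadj c s0 h)
  have hLeq : ∑ s, x c s * load x s = load x s0 := by
    have : ∀ s, x c s * load x s = x c s * load x s0 := by
      intro s
      rcases eq_or_lt_of_le (hx0 c s) with h | h
      · rw [← h]; ring
      · have hadjs : Adj c s := by
          by_contra hn; exact (ne_of_gt h) (hxadj c s hn)
        have h1 := hbal c s h s0 hadj0
        have h2 := hbal c s0 hs0pos s hadjs
        rw [le_antisymm h1 h2]
    rw [Finset.sum_congr rfl fun s _ => this s, ← Finset.sum_mul, hx1 c, one_mul]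
  have hRge : load x s0 ≤ ∑ s, xstar c s * load x s := by
    have : ∀ s, xstar c s * load x s0 ≤ xstar c s * load x s := by
      intro s
      rcases eq_or_lt_of_le (hy0 c s) with h | h
      · rw [← h]; simp
      · have hadjs : Adj c s := by
          by_contra hn; exact (ne_of_gt h) (hyadj c s hn)
        exact mul_le_mul_of_nonneg_left (hbal c s0 hs0pos s hadjs) (hy0 c s)
    calc load x s0 = ∑ s, xstar c s * load x s0 := by
          rw [← Finset.sum_mul, hy1 c, one_mul]
      _ ≤ ∑ s, xstar c s * load x s := Finset.sum_le_sum fun s _ => this s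
  rw [hLeq]; exact hRge

/-- Any balanced server flow minimizes `∑ α(s)²` among all server flows; consequently
any two balanced server flows have the same load vector. -/
theorem stmt_7 {C S : Type*} [Fintype C] [Fintype S]
    (Adj : C → S → Prop)
    (hnb : ∀ c : C, ∃ s, Adj c s)
    (x : C → S → ℝ)
    (hflow : IsServerFlow Adj x) (hbal : IsBalanced Adj x) :
    (∀ xstar : C → S → ℝ, IsServerFlow Adj xstar →
      ∑ s, (load x s) ^ 2 ≤ ∑ s, (load xstar s) ^ 2) ∧
    (∀ y : C → S → ℝ, IsServerFlow Adj y → IsBalanced Adj y →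
      ∀ s, load x s = load y s) := by
  constructor
  · intro xstar hstar
    have h1 := key_ineq Adj x xstar hflow hbal hstar
    have h2 : ∑ s, load x s * load xstar s ≤
        (∑ s, (load x s) ^ 2 + ∑ s, (load xstar s) ^ 2) / 2 := by
      rw [← Finset.sum_add_distrib, Finset.sum_div]
      refine Finset.sum_le_sum fun s _ => ?_
      nlinarith [sq_nonneg (load x s - load xstar s)]
    linarith
  · intro y hy hby
    have h1 := key_ineq Adj x y hflow hbal hy
    have h2 := key_ineq Adj y x hy hby hflow
    have h3 : ∑ s, (load x s - load y s) ^ 2 ≤ 0 := by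
      have : ∑ s, (load x s - load y s) ^ 2 =
          (∑ s, (load x s) ^ 2 - ∑ s, load x s * load y s) +
          (∑ s, (load y s) ^ 2 - ∑ s, load y s * load x s) := by
        rw [← Finset.sum_sub_distrib, ← Finset.sum_sub_distrib, ← Finset.sum_add_distrib]
        refine Finset.sum_congr rfl fun s _ => ?_
        ring
      rw [this]; linarith
    intro s
    have h4 : ∀ s ∈ Finset.univ, (0:ℝ) ≤ (load x s - load y s) ^ 2 :=
      fun s _ => sq_nonneg _
    have h5 := (Finset.sum_eq_zero_iff_of_nonneg h4).mp
      (le_antisymm h3 (Finset.sum_nonneg h4))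
    have := h5 s (Finset.mem_univ s)
    have := sq_eq_zero_iff.mp this
    linarith
end

section
/- If K₁ and K₂ are subsets of C each attaining the maximum ratio α̂ = max_{∅ ⊂ K ⊆ C} |K|/|N(K)| with equality |K_i| = α̂·|N(K_i)|, then K₁ ∪ K₂ also satisfies |K₁ ∪ K₂| = α̂·|N(K₁ ∪ K₂)|. In other words, the family of tight sets is closed under union. -/
open scoped Classical

lemma NB_union {C S : Type*} [Fintype S] [DecidableEq C] (Adj : C → S → Prop) (K₁ K₂ : Finset C) :
    NB Adj (K₁ ∪ K₂) = NB Adj K₁ ∪ NB Adj K₂ := by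
  ext s
  simp only [NB, Finset.mem_filter, Finset.mem_union, Finset.mem_univ, true_and]
  constructor
  · rintro ⟨c, hc | hc, h⟩
    · exact Or.inl ⟨c, hc, h⟩
    · exact Or.inr ⟨c, hc, h⟩
  · rintro (⟨c, hc, h⟩ | ⟨c, hc, h⟩)
    · exact ⟨c, Or.inl hc, h⟩
    · exact ⟨c, Or.inr hc, h⟩

lemma NB_inter_subset {C S : Type*} [Fintype S] [DecidableEq C] (Adj : C → S → Prop)
    (K₁ K₂ : Finset C) : NB Adj (K₁ ∩ K₂) ⊆ NB Adj K₁ ∩ NB Adj K₂ := by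
  intro s hs
  simp only [NB, Finset.mem_filter, Finset.mem_inter, Finset.mem_univ, true_and] at hs ⊢
  obtain ⟨c, hc, h⟩ := hs
  exact ⟨⟨c, hc.1, h⟩, ⟨c, hc.2, h⟩⟩

/-- Tight sets are closed under union: if `|K| ≤ α̂·|N(K)|` for all `K` and
`|K₁| = α̂·|N(K₁)|`, `|K₂| = α̂·|N(K₂)|`, then `|K₁ ∪ K₂| = α̂·|N(K₁ ∪ K₂)|`. -/
theorem stmt_8 {C S : Type*} [Fintype C] [Fintype S] [DecidableEq C] [Nonempty C]
    (Adj : C → S → Prop)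
    (hnb : ∀ c : C, ∃ s, Adj c s)
    (ahat : ℝ)
    (hub : ∀ K : Finset C, (K.card : ℝ) ≤ ahat * ((NB Adj K).card : ℝ))
    (K₁ K₂ : Finset C)
    (h₁ : (K₁.card : ℝ) = ahat * ((NB Adj K₁).card : ℝ))
    (h₂ : (K₂.card : ℝ) = ahat * ((NB Adj K₂).card : ℝ)) :
    ((K₁ ∪ K₂).card : ℝ) = ahat * ((NB Adj (K₁ ∪ K₂)).card : ℝ) := by
  -- α̂ ≥ 0
  have hpos : 0 ≤ ahat := by
    obtain ⟨c⟩ := (inferInstance : Nonempty C)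
    have h := hub {c}
    simp only [Finset.card_singleton, Nat.cast_one] at h
    nlinarith [Nat.cast_nonneg (α := ℝ) (NB Adj {c}).card]
  have hle := hub (K₁ ∪ K₂)
  have hge : ahat * ((NB Adj (K₁ ∪ K₂)).card : ℝ) ≤ ((K₁ ∪ K₂).card : ℝ) := by
    -- card counting on C
    have hcC : ((K₁ ∪ K₂).card : ℝ) + ((K₁ ∩ K₂).card : ℝ) = (K₁.card : ℝ) + (K₂.card : ℝ) := by
      have := Finset.card_union_add_card_inter K₁ K₂
      exact_mod_cast congrArg (Nat.cast : ℕ → ℝ) this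
    -- card counting on S
    have hcS : ((NB Adj (K₁ ∪ K₂)).card : ℝ) + ((NB Adj (K₁ ∩ K₂)).card : ℝ)
        ≤ ((NB Adj K₁).card : ℝ) + ((NB Adj K₂).card : ℝ) := by
      have h1 := Finset.card_union_add_card_inter (NB Adj K₁) (NB Adj K₂)
      have h2 : (NB Adj (K₁ ∩ K₂)).card ≤ (NB Adj K₁ ∩ NB Adj K₂).card :=
        Finset.card_le_card (NB_inter_subset Adj K₁ K₂)
      have h3 : NB Adj (K₁ ∪ K₂) = NB Adj K₁ ∪ NB Adj K₂ := NB_union Adj K₁ K₂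
      rw [h3]
      have : ((NB Adj K₁ ∪ NB Adj K₂).card : ℝ) + ((NB Adj K₁ ∩ NB Adj K₂).card : ℝ)
          = ((NB Adj K₁).card : ℝ) + ((NB Adj K₂).card : ℝ) := by exact_mod_cast congrArg (Nat.cast : ℕ → ℝ) h1
      have h2' : ((NB Adj (K₁ ∩ K₂)).card : ℝ) ≤ ((NB Adj K₁ ∩ NB Adj K₂).card : ℝ) := by exact_mod_cast h2
      linarith
    have hinter := hub (K₁ ∩ K₂)
    have : ahat * (((NB Adj (K₁ ∪ K₂)).card : ℝ) + ((NB Adj (K₁ ∩ K₂)).card : ℝ))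
        ≤ ahat * (((NB Adj K₁).card : ℝ) + ((NB Adj K₂).card : ℝ)) :=
      mul_le_mul_of_nonneg_left hcS hpos
    nlinarith
  linarith
end

section
/- When a new client c is added to the graph (with any set of incident edges to servers), the unique balanced server flow loads can only increase: for every server s, the balanced load after the insertion is at least the balanced load before the insertion. -/
open scoped Classical

/-- When a new client (with a nonempty set of edges to the servers) is inserted, the
balanced server loads can only increase: if `x` is a balanced flow of the old graph and
`y` a balanced flow of the new graph, then every server load weakly increases. -/
theorem stmt_10 {C S : Type*} [Fintype C] [Fintype S]
    (Adj : C → S → Prop) (newAdj : S → Prop)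
    (hnb : ∀ c : C, ∃ s, Adj c s) (hnew : ∃ s, newAdj s)
    (Adj' : Option C → S → Prop)
    (hAdj' : ∀ o s, Adj' o s ↔ o.elim (newAdj s) (fun c => Adj c s))
    (x : C → S → ℝ) (y : Option C → S → ℝ)
    (hx : IsServerFlow Adj x ∧ IsBalanced Adj x)
    (hy : IsServerFlow Adj' y ∧ IsBalanced Adj' y) :
    ∀ s, load x s ≤ load y s := by
  classical
  obtain ⟨⟨hxnn, hxsupp, hxsum⟩, hxbal⟩ := hx
  obtain ⟨⟨hynn, hysupp, hysum⟩, hybal⟩ := hy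
  by_contra h
  push_neg at h
  obtain ⟨s₀, hs₀⟩ := h
  set T : Finset S := Finset.univ.filter (fun s => load y s < load x s) with hT
  have hTne : T.Nonempty := ⟨s₀, by simp [hT, hs₀]⟩
  set D : Finset C := Finset.univ.filter (fun c => ∃ s ∈ T, 0 < x c s) with hD
  have key : ∀ c ∈ D, ∀ s' ∉ T, y (some c) s' = 0 := by
    intro c hc s' hs'
    by_contra hne
    have hpos : 0 < y (some c) s' := lt_of_le_of_ne (hynn _ _) (Ne.symm hne)
    have hAdjy : Adj' (some c) s' := by
      by_contra hA; exact hne (hysupp _ _ hA)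
    have hAdjx : Adj c s' := (hAdj' (some c) s').mp hAdjy
    obtain ⟨s, hsT, hxcs⟩ := (Finset.mem_filter.mp hc).2
    have hsTlt : load y s < load x s := (Finset.mem_filter.mp hsT).2
    have hAdjxs : Adj c s := by
      by_contra hA
      exact absurd (hxsupp c s hA) (ne_of_gt hxcs)
    have h1 : load y s' ≤ load y s := hybal _ _ hpos s ((hAdj' _ _).mpr hAdjxs)
    have h2 : load x s ≤ load x s' := hxbal c s hxcs s' hAdjx
    have h3 : load x s' ≤ load y s' := not_lt.mp (by simpa [hT] using hs')
    linarith
  have hyB : (D.card : ℝ) ≤ ∑ s ∈ T, load y s := by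
    have e1 : ∀ c ∈ D, ∑ s ∈ T, y (some c) s = 1 := by
      intro c hc
      have : ∑ s ∈ T, y (some c) s = ∑ s, y (some c) s :=
        Finset.sum_subset (Finset.subset_univ _) (fun s _ hs => key c hc s hs)
      rw [this, hysum]
    calc (D.card : ℝ) = ∑ c ∈ D, (1 : ℝ) := by simp
      _ = ∑ c ∈ D, ∑ s ∈ T, y (some c) s := by
          exact Finset.sum_congr rfl fun c hc => (e1 c hc).symm
      _ ≤ ∑ c : C, ∑ s ∈ T, y (some c) s :=
          Finset.sum_le_sum_of_subset_of_nonneg (Finset.subset_univ _)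
            (fun c _ _ => Finset.sum_nonneg fun s _ => hynn _ _)
      _ ≤ ∑ o : Option C, ∑ s ∈ T, y o s := by
          rw [Fintype.sum_option]
          have : (0:ℝ) ≤ ∑ s ∈ T, y none s := Finset.sum_nonneg fun s _ => hynn _ _
          linarith
      _ = ∑ s ∈ T, load y s := by
          rw [Finset.sum_comm]; simp [load]
  have hxB : ∑ s ∈ T, load x s ≤ (D.card : ℝ) := by
    have e0 : ∑ s ∈ T, load x s = ∑ c, ∑ s ∈ T, x c s := by
      rw [Finset.sum_comm]; simp [load]
    have e1 : ∑ c, ∑ s ∈ T, x c s = ∑ c ∈ D, ∑ s ∈ T, x c s := by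
      symm
      apply Finset.sum_subset (Finset.subset_univ _)
      intro c _ hc
      apply Finset.sum_eq_zero
      intro s hs
      have hnpos : ¬ 0 < x c s := by
        intro hp
        exact hc (Finset.mem_filter.mpr ⟨Finset.mem_univ _, ⟨s, hs, hp⟩⟩)
      exact le_antisymm (not_lt.mp hnpos) (hxnn c s)
    rw [e0, e1]
    calc ∑ c ∈ D, ∑ s ∈ T, x c s ≤ ∑ c ∈ D, (1:ℝ) := by
          refine Finset.sum_le_sum fun c _ => ?_
          rw [← hxsum c]
          exact Finset.sum_le_sum_of_subset_of_nonneg (Finset.subset_univ _)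
            (fun s _ _ => hxnn _ _)
      _ = (D.card : ℝ) := by simp
  have hstrict : ∑ s ∈ T, load y s < ∑ s ∈ T, load x s :=
    Finset.sum_lt_sum_of_nonempty hTne fun s hs => (Finset.mem_filter.mp hs).2
  linarith
end

section
/- When a new client c is added, any server s whose old balanced load satisfies α^old(s) < min_{v ∈ N(c)} α^old(v) has unchanged balanced load: α^new(s) = α^old(s). That is, inserting c cannot affect servers whose load was strictly below the minimum load among c's neighbors. -/
open scoped Classical

/-- When a new client `c` is inserted, any server whose old balanced load is strictly
below the minimum old load among `c`'s neighbors keeps exactly the same balanced load. -/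
theorem stmt_11 {C S : Type*} [Fintype C] [Fintype S]
    (Adj : C → S → Prop) (newAdj : S → Prop)
    (hnb : ∀ c : C, ∃ s, Adj c s) (hnew : ∃ s, newAdj s)
    (Adj' : Option C → S → Prop)
    (hAdj' : ∀ o s, Adj' o s ↔ o.elim (newAdj s) (fun c => Adj c s))
    (x : C → S → ℝ) (y : Option C → S → ℝ)
    (hx : IsServerFlow Adj x ∧ IsBalanced Adj x)
    (hy : IsServerFlow Adj' y ∧ IsBalanced Adj' y) :
    ∀ s, (∀ v, newAdj v → load x s < load x v) → load y s = load x s := by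
  obtain ⟨⟨hx0, hxsupp, hx1⟩, hxbal⟩ := hx
  obtain ⟨⟨hy0, hysupp, hy1⟩, hybal⟩ := hy
  -- Step 1: monotonicity, every server's load weakly increases.
  have mono : ∀ s, load x s ≤ load y s := by
    by_contra hc
    push_neg at hc
    obtain ⟨s₁, hs₁⟩ := hc
    set T : Finset S := Finset.univ.filter (fun s => load y s < load x s) with hT
    have hs₁T : s₁ ∈ T := by simp [hT, hs₁]
    have key : ∀ c : C, ∑ s ∈ T, x c s ≤ ∑ s ∈ T, y (some c) s := by
      intro c
      by_cases h : ∀ s ∈ T, x c s = 0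
      · rw [Finset.sum_eq_zero h]
        exact Finset.sum_nonneg fun s _ => hy0 _ s
      · push_neg at h
        obtain ⟨s, hsT, hxs⟩ := h
        have hxs' : 0 < x c s := lt_of_le_of_ne (hx0 c s) (Ne.symm hxs)
        have hAdjcs : Adj c s := by
          by_contra hA; exact hxs (hxsupp c s hA)
        have hAdj'cs : Adj' (some c) s := (hAdj' (some c) s).mpr hAdjcs
        have hall : ∀ s', s' ∉ T → y (some c) s' = 0 := by
          intro s' hs'
          by_contra hys'
          have hys'' : 0 < y (some c) s' := lt_of_le_of_ne (hy0 _ s') (Ne.symm hys')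
          have hAdjs' : Adj c s' := (hAdj' (some c) s').mp (by
            by_contra hA; exact hys' (hysupp _ s' hA))
          have h1 : load x s ≤ load x s' := hxbal c s hxs' s' hAdjs'
          have h2 : load y s' ≤ load y s := hybal (some c) s' hys'' s hAdj'cs
          have h3 : load y s < load x s := by
            simpa [hT] using hsT
          have h4 : load x s' ≤ load y s' := by
            by_contra h5; push_neg at h5
            exact hs' (by simp [hT, h5])
          linarith
        have hys1 : ∑ s ∈ T, y (some c) s = 1 := by
          rw [Finset.sum_subset (Finset.subset_univ T) (fun s' _ hs' => hall s' hs')]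
          exact hy1 (some c)
        rw [hys1]
        calc ∑ s ∈ T, x c s ≤ ∑ s : S, x c s :=
              Finset.sum_le_sum_of_subset_of_nonneg (Finset.subset_univ T)
                (fun i _ _ => hx0 c i)
          _ = 1 := hx1 c
    have hsum : ∑ s ∈ T, load x s ≤ ∑ s ∈ T, load y s := by
      have h1 : ∑ s ∈ T, load x s = ∑ c : C, ∑ s ∈ T, x c s := by
        simp only [load]; rw [Finset.sum_comm]
      have h2 : ∑ s ∈ T, load y s = ∑ o : Option C, ∑ s ∈ T, y o s := by
        simp only [load]; rw [Finset.sum_comm]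
      rw [h1, h2, Fintype.sum_option]
      have h3 : (0:ℝ) ≤ ∑ s ∈ T, y none s := Finset.sum_nonneg fun s _ => hy0 _ s
      have h4 : ∑ c : C, ∑ s ∈ T, x c s ≤ ∑ c : C, ∑ s ∈ T, y (some c) s :=
        Finset.sum_le_sum fun c _ => key c
      linarith
    have hlt : ∑ s ∈ T, load y s < ∑ s ∈ T, load x s :=
      Finset.sum_lt_sum_of_nonempty ⟨s₁, hs₁T⟩ (fun i hi => by simpa [hT] using hi)
    linarith
  -- Step 2: the main claim.
  intro s₀ hlow
  set W : Finset S := Finset.univ.filter (fun s => load x s ≤ load x s₀) with hW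
  have hs₀W : s₀ ∈ W := by simp [hW]
  -- each old client sends no more flow (in y) into W than in x
  have key : ∀ c : C, ∑ s ∈ W, y (some c) s ≤ ∑ s ∈ W, x c s := by
    intro c
    by_cases h : ∀ s ∈ W, y (some c) s = 0
    · rw [Finset.sum_eq_zero h]
      exact Finset.sum_nonneg fun s _ => hx0 c s
    · push_neg at h
      obtain ⟨s, hsW, hys⟩ := h
      have hys' : 0 < y (some c) s := lt_of_le_of_ne (hy0 _ s) (Ne.symm hys)
      have hAdjcs : Adj c s := (hAdj' (some c) s).mp (by
        by_contra hA; exact hys (hysupp _ s hA))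
      have hall : ∀ s', s' ∉ W → x c s' = 0 := by
        intro s' hs'
        by_contra hxs'
        have hxs'' : 0 < x c s' := lt_of_le_of_ne (hx0 c s') (Ne.symm hxs')
        have h1 : load x s' ≤ load x s := hxbal c s' hxs'' s hAdjcs
        have h2 : load x s ≤ load x s₀ := by simpa [hW] using hsW
        have h3 : ¬ load x s' ≤ load x s₀ := by
          intro h4; exact hs' (by simp [hW, h4])
        exact h3 (le_trans h1 h2)
      have hxs1 : ∑ s ∈ W, x c s = 1 := by
        rw [Finset.sum_subset (Finset.subset_univ W) (fun s' _ hs' => hall s' hs')]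
        exact hx1 c
      rw [hxs1]
      calc ∑ s ∈ W, y (some c) s ≤ ∑ s : S, y (some c) s :=
            Finset.sum_le_sum_of_subset_of_nonneg (Finset.subset_univ W)
              (fun i _ _ => hy0 _ i)
        _ = 1 := hy1 (some c)
  -- the new client sends no flow into W
  have hnone : ∀ s ∈ W, y none s = 0 := by
    intro s hsW
    by_contra hys
    have hys' : 0 < y none s := lt_of_le_of_ne (hy0 _ s) (Ne.symm hys)
    have hnews : newAdj s := (hAdj' none s).mp (by
      by_contra hA; exact hys (hysupp _ s hA))
    have h1 : load x s₀ < load x s := hlow s hnews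
    have h2 : load x s ≤ load x s₀ := by simpa [hW] using hsW
    linarith
  have hsum : ∑ s ∈ W, load y s ≤ ∑ s ∈ W, load x s := by
    have h1 : ∑ s ∈ W, load x s = ∑ c : C, ∑ s ∈ W, x c s := by
      simp only [load]; rw [Finset.sum_comm]
    have h2 : ∑ s ∈ W, load y s = ∑ o : Option C, ∑ s ∈ W, y o s := by
      simp only [load]; rw [Finset.sum_comm]
    rw [h1, h2, Fintype.sum_option, Finset.sum_eq_zero hnone]
    simpa using Finset.sum_le_sum fun c (_ : c ∈ Finset.univ) => key c
  -- conclude pointwise equality at s₀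
  refine le_antisymm ?_ (mono s₀)
  by_contra h
  push_neg at h
  have hlt : ∑ s ∈ W, load x s < ∑ s ∈ W, load y s :=
    Finset.sum_lt_sum (fun i _ => mono i) ⟨s₀, hs₀W, h⟩
  linarith
end

section
/- A bipartite graph G = (C ∪ S, E) in which every client has at least one neighbor contains a matching saturating all of C if and only if every server load in the unique balanced server flow satisfies α(s) ≤ 1. -/
open scoped Classical

/-- A bipartite graph in which every client has a neighbor contains a matching
saturating all clients if and only if every balanced server load is at most `1`. -/
theorem stmt_12 {C S : Type*} [Fintype C] [Fintype S] [Nonempty C]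
    (Adj : C → S → Prop)
    (hnb : ∀ c : C, ∃ s, Adj c s)
    (x : C → S → ℝ)
    (hflow : IsServerFlow Adj x) (hbal : IsBalanced Adj x) :
    (∃ m : C → S, Function.Injective m ∧ ∀ c, Adj c (m c)) ↔ (∀ s, load x s ≤ 1) := by
  obtain ⟨hnn, hsupp, hsum⟩ := hflow
  constructor
  · rintro ⟨m, hminj, hmadj⟩ s
    by_contra h
    push_neg at h
    obtain ⟨s0, -, hs0⟩ := Finset.exists_max_image Finset.univ (load x) ⟨s, Finset.mem_univ s⟩
    have hs0max : ∀ t : S, load x t ≤ load x s0 := fun t => hs0 t (Finset.mem_univ t)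
    set M := load x s0 with hM
    have hM1 : 1 < M := lt_of_lt_of_le h (hs0max s)
    set T : Finset S := Finset.univ.filter (fun t => load x t = M) with hT
    have hs0T : s0 ∈ T := by simp [hT, hM]
    set K : Finset C := Finset.univ.filter (fun c => ∃ t ∈ T, 0 < x c t) with hK
    -- every c ∈ K has m c ∈ T
    have hmT : ∀ c ∈ K, m c ∈ T := by
      intro c hc
      rw [hK, Finset.mem_filter] at hc
      obtain ⟨-, t, ht, hxt⟩ := hc
      have hadj : Adj c t := by
        by_contra hna
        exact absurd (hsupp c t hna) (ne_of_gt hxt)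
      have hloadt : load x t = M := (Finset.mem_filter.mp ht).2
      have h1 : M ≤ load x (m c) := hloadt ▸ hbal c t hxt (m c) (hmadj c)
      rw [hT, Finset.mem_filter]
      exact ⟨Finset.mem_univ _, le_antisymm (hs0max (m c)) h1⟩
    have hKT : K.card ≤ T.card :=
      Finset.card_le_card_of_injOn m (fun c hc => hmT c hc)
        (fun a _ b _ hab => hminj hab)
    -- M * |T| ≤ |K|
    have hsumT : ∑ t ∈ T, load x t = M * T.card := by
      rw [Finset.sum_congr rfl (fun t ht => (Finset.mem_filter.mp ht).2)]
      simp [mul_comm]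
      exact Or.inl rfl
    have hflowK : ∑ t ∈ T, load x t ≤ (K.card : ℝ) := by
      have : ∑ t ∈ T, load x t = ∑ c, ∑ t ∈ T, x c t := by
        rw [Finset.sum_comm]
        simp [load]
      rw [this]
      have hsplit : ∑ c, ∑ t ∈ T, x c t = ∑ c ∈ K, ∑ t ∈ T, x c t := by
        rw [← Finset.sum_filter_add_sum_filter_not Finset.univ
          (fun c => ∃ t ∈ T, 0 < x c t) (fun c => ∑ t ∈ T, x c t)]
        have : ∑ c ∈ Finset.univ.filter (fun c => ¬ ∃ t ∈ T, 0 < x c t),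
            ∑ t ∈ T, x c t = 0 := by
          apply Finset.sum_eq_zero
          intro c hc
          rw [Finset.mem_filter] at hc
          push_neg at hc
          exact Finset.sum_eq_zero fun t ht =>
            le_antisymm (hc.2 t ht) (hnn c t)
        rw [this, add_zero]
      rw [hsplit]
      calc ∑ c ∈ K, ∑ t ∈ T, x c t ≤ ∑ c ∈ K, (1 : ℝ) := by
            apply Finset.sum_le_sum
            intro c _
            calc ∑ t ∈ T, x c t ≤ ∑ t, x c t :=
                  Finset.sum_le_sum_of_subset_of_nonneg (Finset.subset_univ T)
                    (fun t _ _ => hnn c t)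
              _ = 1 := hsum c
        _ = (K.card : ℝ) := by simp
    have hTpos : (0 : ℝ) < T.card := by
      exact_mod_cast Finset.card_pos.mpr ⟨s0, hs0T⟩
    have : M * T.card ≤ (K.card : ℝ) := hsumT ▸ hflowK
    have hKTr : (K.card : ℝ) ≤ T.card := by exact_mod_cast hKT
    nlinarith
  · intro hle
    have hall := (Finset.all_card_le_biUnion_card_iff_exists_injective
      (fun c : C => Finset.univ.filter (fun s => Adj c s))).mp ?_
    · obtain ⟨f, hf, hfm⟩ := hall
      exact ⟨f, hf, fun c => (Finset.mem_filter.mp (hfm c)).2⟩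
    · intro A
      set B := A.biUnion (fun c : C => Finset.univ.filter (fun s => Adj c s)) with hB
      have key : (A.card : ℝ) ≤ (B.card : ℝ) := by
        have h1 : (A.card : ℝ) = ∑ c ∈ A, ∑ s ∈ B, x c s := by
          have : ∀ c ∈ A, ∑ s ∈ B, x c s = 1 := by
            intro c hc
            rw [← hsum c]
            apply Finset.sum_subset (Finset.subset_univ B)
            intro s _ hsB
            apply hsupp
            intro hadj
            exact hsB (Finset.mem_biUnion.mpr ⟨c, hc, by simp [hadj]⟩)
          rw [Finset.sum_congr rfl this]
          simp
        rw [h1, Finset.sum_comm]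
        calc ∑ s ∈ B, ∑ c ∈ A, x c s ≤ ∑ s ∈ B, (1 : ℝ) := by
              apply Finset.sum_le_sum
              intro s _
              calc ∑ c ∈ A, x c s ≤ ∑ c, x c s :=
                    Finset.sum_le_sum_of_subset_of_nonneg (Finset.subset_univ A)
                      (fun c _ _ => hnn c s)
                _ = load x s := rfl
                _ ≤ 1 := hle s
          _ = (B.card : ℝ) := by simp
      exact_mod_cast key
end

section
/- Let M be a maximum matching in a finite bipartite graph G = (C ∪ S, E) in which every client is matched, and let α be the balanced server flow loads (so α(s) ≤ 1 for all s). Then for a server s there exists an augmenting tail from s to an unmatched server if and only if α(s) < 1. -/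
open scoped Classical

/-- An augmenting tail from server `s₀` with respect to the matching `m` (which
saturates all clients): an alternating walk `s₀ = sv 0, cl 0, sv 1, …, sv k` in which
each `(cl i, sv i)` is a matched edge and each `(cl i, sv (i+1))` is an edge of the
graph, ending at an unmatched server `sv k`. -/
def Tail {C S : Type*} (Adj : C → S → Prop) (m : C → S) (s₀ : S)
    (k : ℕ) (sv : ℕ → S) (cl : ℕ → C) : Prop :=
  sv 0 = s₀ ∧
  (∀ i < k, m (cl i) = sv i) ∧
  (∀ i < k, Adj (cl i) (sv (i + 1))) ∧
  (∀ c, m c ≠ sv k)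

section Aux
variable {C S : Type*} [Fintype C] [Fintype S]
variable {Adj : C → S → Prop} {m : C → S} {x : C → S → ℝ}

lemma key_nbr (hbal : IsBalanced Adj x) (β : ℝ) (c : C)
    (hc : ∃ t, β ≤ load x t ∧ 0 < x c t) :
    ∀ s', Adj c s' → β ≤ load x s' := by
  intro s' hs'
  obtain ⟨t, ht, hxt⟩ := hc
  exact ht.trans (hbal c t hxt s' hs')

lemma key_sum (hflow : IsServerFlow Adj x) (hbal : IsBalanced Adj x) (β : ℝ) :
    ∑ t ∈ Finset.univ.filter (fun t => β ≤ load x t), load x t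
      = (Finset.univ.filter (fun c : C => ∃ t, β ≤ load x t ∧ 0 < x c t)).card := by
  classical
  set T := Finset.univ.filter (fun t => β ≤ load x t) with hT
  set CT := Finset.univ.filter (fun c : C => ∃ t, β ≤ load x t ∧ 0 < x c t) with hCT
  have hrow : ∀ c : C, ∑ t ∈ T, x c t = if c ∈ CT then 1 else 0 := by
    intro c
    by_cases hc : c ∈ CT
    · rw [if_pos hc, ← hflow.2.2 c]
      apply Finset.sum_subset (Finset.subset_univ T)
      intro t _ htT
      by_contra hne
      have hpos : 0 < x c t := lt_of_le_of_ne (hflow.1 c t) (Ne.symm hne)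
      have hadj : Adj c t := by
        by_contra h; exact hne (hflow.2.1 c t h)
      exact htT (Finset.mem_filter.mpr ⟨Finset.mem_univ t,
        key_nbr hbal β c (Finset.mem_filter.mp hc).2 t hadj⟩)
    · rw [if_neg hc]
      apply Finset.sum_eq_zero
      intro t htT
      by_contra hne
      have hpos : 0 < x c t := lt_of_le_of_ne (hflow.1 c t) (Ne.symm hne)
      exact hc (Finset.mem_filter.mpr ⟨Finset.mem_univ c,
        ⟨t, (Finset.mem_filter.mp htT).2, hpos⟩⟩)
  calc ∑ t ∈ T, load x t = ∑ t ∈ T, ∑ c, x c t := rfl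
    _ = ∑ c, ∑ t ∈ T, x c t := Finset.sum_comm
    _ = ∑ c, (if c ∈ CT then (1:ℝ) else 0) := by simp_rw [hrow]
    _ = CT.card := by simp

lemma key_card (hm : Function.Injective m) (hmAdj : ∀ c, Adj c (m c))
    (hbal : IsBalanced Adj x) (β : ℝ) :
    (Finset.univ.filter (fun c : C => ∃ t, β ≤ load x t ∧ 0 < x c t)).card
      ≤ (Finset.univ.filter (fun t => β ≤ load x t)).card := by
  classical
  apply Finset.card_le_card_of_injOn m
  · intro c hc
    exact Finset.mem_filter.mpr ⟨Finset.mem_univ _,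
      key_nbr hbal β c (Finset.mem_filter.mp hc).2 (m c) (hmAdj c)⟩
  · exact fun a _ b _ h => hm h

lemma load_le_one (hm : Function.Injective m) (hmAdj : ∀ c, Adj c (m c))
    (hflow : IsServerFlow Adj x) (hbal : IsBalanced Adj x) (t : S) :
    load x t ≤ 1 := by
  classical
  set β := load x t with hβ
  set T := Finset.univ.filter (fun t => β ≤ load x t) with hT
  have htT : t ∈ T := Finset.mem_filter.mpr ⟨Finset.mem_univ _, le_refl _⟩
  have hlb : (T.card : ℝ) * β ≤ ∑ u ∈ T, load x u := by
    have := Finset.card_nsmul_le_sum T (load x) β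
      (fun u hu => (Finset.mem_filter.mp hu).2)
    simpa [nsmul_eq_mul] using this
  have hub : ∑ u ∈ T, load x u ≤ (T.card : ℝ) := by
    rw [key_sum hflow hbal β]
    exact_mod_cast key_card hm hmAdj hbal β
  have hc1 : (1:ℝ) ≤ T.card := by
    exact_mod_cast Finset.card_pos.mpr ⟨t, htT⟩
  nlinarith

lemma load_one_matched (hm : Function.Injective m) (hmAdj : ∀ c, Adj c (m c))
    (hflow : IsServerFlow Adj x) (hbal : IsBalanced Adj x) (t : S)
    (ht : load x t = 1) :
    ∃ c, m c = t ∧ ∀ s', Adj c s' → load x s' = 1 := by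
  classical
  set T := Finset.univ.filter (fun t : S => (1:ℝ) ≤ load x t) with hT
  set CT := Finset.univ.filter (fun c : C => ∃ t, (1:ℝ) ≤ load x t ∧ 0 < x c t) with hCT
  have hTload : ∀ u ∈ T, load x u = 1 := fun u hu =>
    le_antisymm (load_le_one hm hmAdj hflow hbal u) (Finset.mem_filter.mp hu).2
  have hsum : ∑ u ∈ T, load x u = (T.card : ℝ) := by
    rw [Finset.sum_congr rfl hTload]; simp
  have hcard : T.card ≤ CT.card := by
    have := key_sum hflow hbal (1:ℝ)
    rw [hsum] at this
    exact_mod_cast this.le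
  have himg : Finset.image m CT = T := by
    apply Finset.eq_of_subset_of_card_le
    · intro u hu
      obtain ⟨c, hc, rfl⟩ := Finset.mem_image.mp hu
      exact Finset.mem_filter.mpr ⟨Finset.mem_univ _,
        key_nbr hbal 1 c (Finset.mem_filter.mp hc).2 (m c) (hmAdj c)⟩
    · rw [Finset.card_image_of_injective _ hm]; exact hcard
  have htT : t ∈ T := Finset.mem_filter.mpr ⟨Finset.mem_univ _, ht.ge⟩
  rw [← himg] at htT
  obtain ⟨c, hc, hct⟩ := Finset.mem_image.mp htT
  refine ⟨c, hct, fun s' hs' => le_antisymm (load_le_one hm hmAdj hflow hbal s')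
    (key_nbr hbal 1 c (Finset.mem_filter.mp hc).2 s' hs')⟩

end Aux

/-- If `m` is a matching saturating all clients and `x` is the balanced server flow,
then a server `s` admits an augmenting tail to an unmatched server iff `α(s) < 1`. -/


theorem stmt_18 {C S : Type*} [Fintype C] [Fintype S] [Nonempty C]
    (Adj : C → S → Prop)
    (hnb : ∀ c : C, ∃ s, Adj c s)
    (m : C → S) (hm : Function.Injective m) (hmAdj : ∀ c, Adj c (m c))
    (x : C → S → ℝ) (hflow : IsServerFlow Adj x) (hbal : IsBalanced Adj x)
    (s : S) :
    (∃ (k : ℕ) (sv : ℕ → S) (cl : ℕ → C), Tail Adj m s k sv cl) ↔ load x s < 1 := by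
  classical
  constructor
  · -- tail implies load < 1
    rintro ⟨k, sv, cl, h0, hmatch, hadj, hunm⟩
    by_contra hlt
    have hs1 : load x s = 1 :=
      le_antisymm (load_le_one hm hmAdj hflow hbal s) (not_lt.mp hlt)
    have hall : ∀ i ≤ k, load x (sv i) = 1 := by
      intro i
      induction i with
      | zero => intro _; rw [h0]; exact hs1
      | succ n ih =>
        intro hnk
        have hn : n < k := hnk
        have hln : load x (sv n) = 1 := ih hn.le
        obtain ⟨c, hcm, hcn⟩ := load_one_matched hm hmAdj hflow hbal (sv n) hln
        have : c = cl n := hm (by rw [hcm, hmatch n hn])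
        subst this
        exact hcn (sv (n+1)) (hadj n hn)
    have hk : load x (sv k) = 1 := hall k le_rfl
    obtain ⟨c, hcm, _⟩ := load_one_matched hm hmAdj hflow hbal (sv k) hk
    exact hunm c hcm
  · -- load < 1 implies tail
    intro hs
    by_contra hnt
    push_neg at hnt
    -- reachability
    set reach : S → Prop := fun t => ∃ (k : ℕ) (sv : ℕ → S) (cl : ℕ → C),
      sv 0 = s ∧ (∀ i < k, m (cl i) = sv i) ∧ (∀ i < k, Adj (cl i) (sv (i+1))) ∧
      sv k = t with hreach
    have hrs : reach s := by
      refine ⟨0, fun _ => s, fun _ => Classical.arbitrary C, rfl, ?_, ?_, rfl⟩ <;>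
        intro i hi <;> omega
    have hmatched : ∀ t, reach t → ∃ c, m c = t := by
      intro t ht
      by_contra hno
      push_neg at hno
      obtain ⟨k, sv, cl, h0, h1, h2, h3⟩ := ht
      exact (hnt k sv cl) ⟨h0, h1, h2, fun c => by rw [h3]; exact hno c⟩
    have hclosed : ∀ t c s', reach t → m c = t → Adj c s' → reach s' := by
      rintro t c s' ⟨k, sv, cl, h0, h1, h2, h3⟩ hcm hadj
      refine ⟨k + 1, fun i => if i = k + 1 then s' else sv i,
        fun i => if i = k then c else cl i, by simp [h0], ?_, ?_, by simp⟩
      · intro i hi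
        rcases Nat.lt_succ_iff_lt_or_eq.mp hi with h | h
        · simp only [if_neg h.ne, if_neg (by omega : i ≠ k + 1)]
          exact h1 i h
        · rw [h]
          simp [hcm, h3]
      · intro i hi
        rcases Nat.lt_succ_iff_lt_or_eq.mp hi with h | h
        · simp only [if_neg h.ne, if_neg (by omega : i + 1 ≠ k + 1)]
          exact h2 i h
        · rw [h]
          simp [hadj]
    set R := Finset.univ.filter reach with hR
    set CR := Finset.univ.filter (fun c => reach (m c)) with hCR
    have hsR : s ∈ R := Finset.mem_filter.mpr ⟨Finset.mem_univ _, hrs⟩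
    -- R.card ≤ CR.card
    have hcard : R.card ≤ CR.card := by
      apply Finset.card_le_card_of_surjOn m
      intro t ht
      obtain ⟨c, hc⟩ := hmatched t (Finset.mem_filter.mp ht).2
      exact ⟨c, Finset.mem_filter.mpr ⟨Finset.mem_univ _, by
        rw [hc]; exact (Finset.mem_filter.mp ht).2⟩, hc⟩
    -- lower bound on sum of loads over R
    have hlb : (CR.card : ℝ) ≤ ∑ t ∈ R, load x t := by
      have hrow : ∀ c : C, c ∈ CR → ∑ t ∈ R, x c t = 1 := by
        intro c hc
        rw [← hflow.2.2 c]
        apply Finset.sum_subset (Finset.subset_univ R)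
        intro t _ htR
        by_contra hne
        have hadj : Adj c t := by
          by_contra h; exact hne (hflow.2.1 c t h)
        exact htR (Finset.mem_filter.mpr ⟨Finset.mem_univ t,
          hclosed (m c) c t (Finset.mem_filter.mp hc).2 rfl hadj⟩)
      calc (CR.card : ℝ) = ∑ c ∈ CR, (1:ℝ) := by simp
        _ = ∑ c ∈ CR, ∑ t ∈ R, x c t := Finset.sum_congr rfl (fun c hc => (hrow c hc).symm)
        _ ≤ ∑ c, ∑ t ∈ R, x c t := by
            apply Finset.sum_le_sum_of_subset_of_nonneg (Finset.subset_univ CR)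
            intro c _ _
            exact Finset.sum_nonneg fun t _ => hflow.1 c t
        _ = ∑ t ∈ R, load x t := Finset.sum_comm
    -- upper bound
    have hub : ∑ t ∈ R, load x t < (R.card : ℝ) := by
      rw [← Finset.add_sum_erase R (load x) hsR]
      have h1 : ∑ t ∈ R.erase s, load x t ≤ ((R.erase s).card : ℝ) := by
        have := Finset.sum_le_card_nsmul (R.erase s) (load x) 1
          (fun t _ => load_le_one hm hmAdj hflow hbal t)
        simpa using this
      have h2 : ((R.erase s).card : ℝ) = (R.card : ℝ) - 1 := by
        rw [Finset.card_erase_of_mem hsR]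
        have : 1 ≤ R.card := Finset.card_pos.mpr ⟨s, hsR⟩
        push_cast [this]
        ring
      linarith
    have := hlb.trans_lt hub
    have : (R.card : ℝ) < (R.card : ℝ) := lt_of_le_of_lt (by exact_mod_cast hcard) this
    exact lt_irrefl _ this
end

section
/- Lower bound construction for exact load balancing: for every positive integer L divisible by 4 there exists a bipartite graph G = (C ∪ S, E) with |C| = L², |S| = L, and opt(G) = L (minimum possible maximum server load is L), together with an insertion order of the clients, such that any algorithm maintaining at all times an assignment of the currently present clients to neighboring servers of minimum possible maximum load must make Ω(L³) total changes to the assignment. In particular, in the path-structured graph where block C_i of clients connects to servers s_i and s_{i+1} (block C_L only to s_L), after each up-heavy epoch the unique optimal assignment assigns all of C_i to s_i, and after each down-heavy epoch there is again a unique optimal assignment, forcing Ω(L²) reassignments per epoch over L/2 epochs. -/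
/-- `optLoad L t Adj` : the minimum possible maximum server load over assignments of
the first `t` clients (those with index `< t`) to neighboring servers. -/
noncomputable def optLoad (L t : ℕ) (Adj : Fin (L ^ 2) → Fin L → Prop) : ℕ :=
  sInf {B : ℕ | ∃ A : Fin (L ^ 2) → Fin L,
    (∀ c : Fin (L ^ 2), (c : ℕ) < t → Adj c (A c)) ∧
    ∀ s : Fin L,
      (Finset.univ.filter fun c : Fin (L ^ 2) => (c : ℕ) < t ∧ A c = s).card ≤ B}

namespace S19

open Finset


/-- block of client `c` (0-indexed), with `L = 2*m` blocks/servers. -/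
def blk (m c : ℕ) : ℕ :=
  if c < 2*m*m then c % (2*m)
  else if ((c - 2*m*m) / (2*m)) % 2 = 0 then ((c - 2*m*m) % (2*m)) / 2
  else m + ((c - 2*m*m) % (2*m)) / 2

lemma blk_lt (m : ℕ) (hm : 0 < m) (c : ℕ) : blk m c < 2*m := by
  unfold blk
  split_ifs with h1 h2
  · exact Nat.mod_lt _ (by omega)
  · have hp : (c - 2*m*m) % (2*m) < 2*m := Nat.mod_lt _ (by omega)
    omega
  · have hp : (c - 2*m*m) % (2*m) < 2*m := Nat.mod_lt _ (by omega)
    omega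

/-- value of `blk` inside epoch `e` -/
lemma blk_epoch_eq (m : ℕ) (hm : 0 < m) (e t : ℕ) (h1 : 2*m*(m+e) ≤ t)
    (h2 : t < 2*m*(m+e+1)) :
    blk m t = (if e % 2 = 0 then 0 else m) + (t - 2*m*(m+e))/2 := by
  have k1 : 2*m*(m+e) = 2*m*m + 2*m*e := by ring
  have k2 : 2*m*(m+e+1) = 2*m*m + 2*m*e + 2*m := by ring
  set d := t - 2*m*m with hd
  have hq : d / (2*m) = e := by
    apply Nat.div_eq_of_lt_le
    · calc e * (2*m) = 2*m*e := by ring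
        _ ≤ d := by omega
    · calc d < 2*m*e + 2*m := by omega
        _ = (e+1)*(2*m) := by ring
  have hmod := Nat.div_add_mod d (2*m)
  rw [hq] at hmod
  have hpm : d % (2*m) = t - 2*m*(m+e) := by omega
  unfold blk
  rw [if_neg (by omega), hq, hpm]
  split_ifs <;> simp

lemma filter_mod_div_eq_image (n k j K : ℕ) (hn : 0 < n) (hj : j < n) (hK : K ≤ k) :
    ((range (n*k)).filter fun c => c % n = j ∧ c / n < K)
      = (range K).image (fun q => n*q + j) := by
  ext c
  simp only [mem_filter, mem_range, mem_image]
  constructor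
  · rintro ⟨h1, h2, h3⟩
    exact ⟨c / n, h3, by have := Nat.div_add_mod c n; omega⟩
  · rintro ⟨q, hq, rfl⟩
    have hmul : n*(q+1) ≤ n*k := Nat.mul_le_mul_left _ (by omega)
    have hmq : n*q + j < n*(q+1) := by nlinarith
    refine ⟨by omega, ?_, ?_⟩
    · simp [Nat.mul_add_mod, Nat.mod_eq_of_lt hj]
    · rw [Nat.mul_add_div hn, Nat.div_eq_of_lt hj]
      omega

lemma count_mod_div (n k j K : ℕ) (hn : 0 < n) (hj : j < n) (hK : K ≤ k) :
    ((range (n*k)).filter fun c => c % n = j ∧ c / n < K).card = K := by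
  rw [filter_mod_div_eq_image n k j K hn hj hK,
    card_image_of_injective _ (fun a b hab => Nat.eq_of_mul_eq_mul_left hn (by omega)),
    card_range]

lemma count_mod (n k j : ℕ) (hn : 0 < n) (hj : j < n) :
    ((range (n*k)).filter fun c => c % n = j).card = k := by
  have hset : ((range (n*k)).filter fun c => c % n = j)
      = ((range (n*k)).filter fun c => c % n = j ∧ c / n < k) := by
    ext c
    simp only [mem_filter, mem_range, and_congr_right_iff]
    intro hc
    exact ⟨fun h => ⟨h, Nat.div_lt_of_lt_mul (by omega)⟩, fun h => h.1⟩
  rw [hset, count_mod_div n k j k hn hj le_rfl]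


/-- number of clients of block `j` among the first `2m(m+e)` (boundary of epoch `e`). -/
def cnt (m e j : ℕ) : ℕ := ((range (2*m*(m+e))).filter fun c => blk m c = j).card

lemma card_filter_Ico (base n : ℕ) (P : ℕ → Prop) [DecidablePred P] :
    ((Ico base (base+n)).filter P).card = ((range n).filter (fun p => P (base + p))).card := by
  apply card_bij' (fun c _ => c - base) (fun p _ => base + p)
  · intro c hc
    simp only [mem_filter, mem_Ico] at hc
    simp only [mem_filter, mem_range]
    refine ⟨by omega, ?_⟩
    have : base + (c - base) = c := by omega
    rw [this]; exact hc.2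
  · intro p hp
    simp only [mem_filter, mem_range] at hp
    simp only [mem_filter, mem_Ico]
    exact ⟨⟨by omega, by omega⟩, hp.2⟩
  · intro c hc
    simp only [mem_filter, mem_Ico] at hc
    omega
  · intro p hp
    omega

lemma card_div2 (n j a : ℕ) : ((range (2*n)).filter fun p => a + p/2 = j).card
    = if a ≤ j ∧ j < a + n then 2 else 0 := by
  split_ifs with h
  · have hset : ((range (2*n)).filter fun p => a + p/2 = j) = {2*(j-a), 2*(j-a)+1} := by
      ext p
      simp only [mem_filter, mem_range, mem_insert, mem_singleton]
      omega
    rw [hset, card_insert_of_notMem (by simp), card_singleton]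
  · have hset : ((range (2*n)).filter fun p => a + p/2 = j) = ∅ := by
      ext p
      simp only [mem_filter, mem_range, notMem_empty, iff_false]
      omega
    rw [hset, card_empty]

lemma epoch_count (m e j : ℕ) (hm : 0 < m) (hj : j < 2*m) :
    ((Ico (2*m*(m+e)) (2*m*(m+e+1))).filter fun c => blk m c = j).card
      = if (e % 2 = 0 ∧ j < m) ∨ (e % 2 = 1 ∧ m ≤ j) then 2 else 0 := by
  have k2 : 2*m*(m+e+1) = 2*m*(m+e) + 2*m := by ring
  rw [k2, card_filter_Ico]
  have hval : ∀ p ∈ range (2*m),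
      (blk m (2*m*(m+e) + p) = j) = ((if e % 2 = 0 then 0 else m) + p/2 = j) := by
    intro p hp
    simp only [mem_range] at hp
    rw [blk_epoch_eq m hm e (2*m*(m+e)+p) (by omega) (by omega)]
    congr 2
    omega
  rw [filter_congr (by intro p hp; rw [← eq_iff_iff, hval p hp])]
  by_cases hp : e % 2 = 0
  · rw [if_pos hp, card_div2]
    split_ifs <;> omega
  · rw [if_neg hp, card_div2]
    split_ifs <;> omega

lemma cnt_zero (m j : ℕ) (hm : 0 < m) (hj : j < 2*m) : cnt m 0 j = m := by
  unfold cnt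
  rw [show 2*m*(m+0) = 2*m*m from by ring]
  have hset : ((range (2*m*m)).filter fun c => blk m c = j)
      = ((range ((2*m)*m)).filter fun c => c % (2*m) = j) := by
    apply filter_congr
    intro c hc
    simp only [mem_range] at hc
    unfold blk
    rw [if_pos (by omega)]
  rw [hset, count_mod (2*m) m j (by omega) hj]

lemma cnt_succ (m e j : ℕ) : cnt m (e+1) j
    = cnt m e j + ((Ico (2*m*(m+e)) (2*m*(m+e+1))).filter fun c => blk m c = j).card := by
  unfold cnt
  rw [show 2*m*(m+(e+1)) = 2*m*(m+e+1) from by ring]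
  rw [← card_union_of_disjoint]
  · congr 1
    rw [← filter_union]
    congr 1
    rw [range_eq_Ico, range_eq_Ico,
      Finset.Ico_union_Ico_eq_Ico (Nat.zero_le _) (Nat.mul_le_mul_left _ (by omega))]
  · apply disjoint_filter_filter
    simp only [range_eq_Ico]
    exact Finset.Ico_disjoint_Ico_consecutive _ _ _

lemma cnt_formula (m j : ℕ) (hm : 0 < m) (hj : j < 2*m) (e : ℕ) :
    cnt m e j = m + e + (if e % 2 = 1 ∧ j < m then 1 else 0)
      - (if e % 2 = 1 ∧ m ≤ j then 1 else 0) := by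
  induction e with
  | zero => simp [cnt_zero m j hm hj]
  | succ e ih =>
    rw [cnt_succ, epoch_count m e j hm hj, ih]
    split_ifs <;> omega


lemma card_fin_filter (N t : ℕ) (ht : t ≤ N) (P : ℕ → Prop) [DecidablePred P] :
    ((univ : Finset (Fin N)).filter fun c : Fin N => (c : ℕ) < t ∧ P (c : ℕ)).card
      = ((range t).filter P).card := by
  have himg : ((range t).filter P)
      = ((univ : Finset (Fin N)).filter fun c : Fin N => (c : ℕ) < t ∧ P (c : ℕ)).image
          (fun c : Fin N => (c : ℕ)) := by
    ext v
    simp only [mem_image, mem_filter, mem_univ, true_and, mem_range]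
    constructor
    · rintro ⟨hv1, hv2⟩
      exact ⟨⟨v, lt_of_lt_of_le hv1 ht⟩, ⟨hv1, hv2⟩, rfl⟩
    · rintro ⟨c, ⟨h1, h2⟩, rfl⟩
      exact ⟨h1, h2⟩
  rw [himg, card_image_of_injective _ Fin.val_injective]

lemma card_fin_lt (N t : ℕ) (ht : t ≤ N) :
    ((univ : Finset (Fin N)).filter fun c : Fin N => (c : ℕ) < t).card = t := by
  have h := card_fin_filter N t ht (fun _ => True)
  simp only [and_true] at h
  rw [h, filter_true_of_mem (fun _ _ => trivial), card_range]

/-- the forced number of block-`i` clients assigned to server `i+1` at boundary `e`. -/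
def target (m e i : ℕ) : ℕ :=
  if e % 2 = 1 then (if i < m then i+1 else 2*m-1-i) else 0

def Scnt (m e i : ℕ) : ℕ := ((range (2*m*(m+e))).filter fun c => blk m c ≤ i).card

lemma Scnt_eq_sum (m e i : ℕ) :
    Scnt m e i = ∑ j ∈ range (i+1), cnt m e j := by
  unfold Scnt cnt
  rw [card_eq_sum_card_fiberwise (f := fun c => blk m c) (t := range (i+1))
    (by intro c hc; simp only [mem_coe, mem_filter] at hc; simp only [mem_coe, mem_range]; omega)]
  apply sum_congr rfl
  intro j hj
  simp only [mem_range] at hj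
  rw [filter_filter]
  congr 1
  apply filter_congr
  intro c _
  constructor
  · exact fun h => h.2
  · exact fun h => ⟨by omega, h⟩

lemma Scnt_val (m e i : ℕ) (hm : 0 < m) (hi : i < 2*m) :
    Scnt m e i = (i+1)*(m+e) + target m e i := by
  rw [Scnt_eq_sum]
  unfold target
  by_cases hp : e % 2 = 1
  · by_cases him : i < m
    · have : ∀ j ∈ range (i+1), cnt m e j = m+e+1 := by
        intro j hj
        simp only [mem_range] at hj
        rw [cnt_formula m j hm (by omega) e]
        split_ifs <;> omega
      rw [sum_congr rfl this, sum_const, card_range, smul_eq_mul, if_pos hp, if_pos him]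
      ring
    · rw [← Finset.sum_range_add_sum_Ico _ (show m ≤ i+1 by omega)]
      have h1 : ∀ j ∈ range m, cnt m e j = m+e+1 := by
        intro j hj
        simp only [mem_range] at hj
        rw [cnt_formula m j hm (by omega) e]
        split_ifs <;> omega
      have h2 : ∀ j ∈ Ico m (i+1), cnt m e j = m+e-1 := by
        intro j hj
        simp only [mem_Ico] at hj
        rw [cnt_formula m j hm (by omega) e]
        split_ifs <;> omega
      rw [sum_congr rfl h1, sum_congr rfl h2, sum_const, sum_const, card_range,
        Nat.card_Ico, smul_eq_mul, smul_eq_mul, if_pos hp, if_neg him]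
      have he1 : 1 ≤ e := by omega
      zify [show m ≤ i+1 from by omega, show 1 ≤ m+e from by omega,
        show 1 ≤ 2*m from by omega, show i ≤ 2*m-1 from by omega]
      ring
  · have : ∀ j ∈ range (i+1), cnt m e j = m+e := by
      intro j hj
      simp only [mem_range] at hj
      rw [cnt_formula m j hm (by omega) e]
      split_ifs <;> omega
    rw [sum_congr rfl this, sum_const, card_range, smul_eq_mul, if_neg hp]
    ring

/-- Key pinning lemma: any assignment of the first `2m(m+e)` clients with all loads
`≤ m+e` has exactly `target m e i` clients of block `i` on server `i+1`. -/
lemma pinned (m : ℕ) (hm : 0 < m) (e : ℕ) (he : e ≤ m)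
    (A : Fin ((2*m)^2) → Fin (2*m))
    (hval : ∀ c : Fin ((2*m)^2), (c : ℕ) < 2*m*(m+e) →
      ((A c : ℕ) = blk m (c : ℕ) ∨ (A c : ℕ) = blk m (c : ℕ) + 1))
    (hload : ∀ s : Fin (2*m),
      (univ.filter fun c : Fin ((2*m)^2) => (c : ℕ) < 2*m*(m+e) ∧ A c = s).card ≤ m + e)
    (i : ℕ) (hi : i < 2*m) :
    (univ.filter fun c : Fin ((2*m)^2) =>
      (c : ℕ) < 2*m*(m+e) ∧ blk m (c : ℕ) = i ∧ (A c : ℕ) = i + 1).card = target m e i := by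
  have hTN : 2*m*(m+e) ≤ (2*m)^2 := by
    rw [pow_two]
    exact Nat.mul_le_mul_left _ (by omega)
  -- server-side sets
  set lowS := (univ : Finset (Fin (2*m))).filter (fun s : Fin (2*m) => (s : ℕ) < i+1)
    with hlowS
  set highS := (univ : Finset (Fin (2*m))).filter (fun s : Fin (2*m) => ¬ (s : ℕ) < i+1)
    with hhighS
  have hlow_card : lowS.card = i + 1 := card_fin_lt (2*m) (i+1) (by omega)
  have hhigh_card : lowS.card + highS.card = 2*m := by
    rw [hlowS, hhighS, card_filter_add_card_filter_not, card_univ, Fintype.card_fin]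
  -- client-side sets
  set Dset := (univ : Finset (Fin ((2*m)^2))).filter
    (fun c : Fin ((2*m)^2) => (c : ℕ) < 2*m*(m+e) ∧ (A c : ℕ) < i+1) with hDset
  set Eset := (univ : Finset (Fin ((2*m)^2))).filter
    (fun c : Fin ((2*m)^2) => (c : ℕ) < 2*m*(m+e) ∧ ¬ (A c : ℕ) < i+1) with hEset
  have hDE : Dset.card + Eset.card = 2*m*(m+e) := by
    rw [hDset, hEset, ← filter_filter, ← filter_filter,
      card_filter_add_card_filter_not, card_fin_lt _ _ hTN]
  -- D bound
  have hD : Dset.card ≤ (i+1) * (m+e) := by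
    rw [card_eq_sum_card_fiberwise (f := fun c => A c) (t := lowS)
      (by intro c hc; rw [hDset, mem_coe, mem_filter] at hc; rw [hlowS, mem_coe, mem_filter]
          exact ⟨mem_univ _, hc.2.2⟩)]
    calc ∑ s ∈ lowS, (Dset.filter fun c => A c = s).card
        ≤ ∑ s ∈ lowS, (m+e) := by
          apply sum_le_sum
          intro s hs
          refine le_trans (card_le_card ?_) (hload s)
          intro c hc
          simp only [hDset, mem_filter, mem_univ, true_and] at hc ⊢
          exact ⟨hc.1.1, hc.2⟩
      _ = (i+1) * (m+e) := by rw [sum_const, hlow_card, smul_eq_mul]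
  -- E bound
  have hE : Eset.card ≤ highS.card * (m+e) := by
    rw [card_eq_sum_card_fiberwise (f := fun c => A c) (t := highS)
      (by intro c hc; rw [hEset, mem_coe, mem_filter] at hc; rw [hhighS, mem_coe, mem_filter]
          exact ⟨mem_univ _, hc.2.2⟩)]
    calc ∑ s ∈ highS, (Eset.filter fun c => A c = s).card
        ≤ ∑ s ∈ highS, (m+e) := by
          apply sum_le_sum
          intro s hs
          refine le_trans (card_le_card ?_) (hload s)
          intro c hc
          simp only [hEset, mem_filter, mem_univ, true_and] at hc ⊢
          exact ⟨hc.1.1, hc.2⟩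
      _ = highS.card * (m+e) := by rw [sum_const, smul_eq_mul]
  -- S decomposition
  set Sset := (univ : Finset (Fin ((2*m)^2))).filter
    (fun c : Fin ((2*m)^2) => (c : ℕ) < 2*m*(m+e) ∧ blk m (c : ℕ) ≤ i) with hSset
  have hS_card : Sset.card = (i+1)*(m+e) + target m e i := by
    rw [hSset, card_fin_filter _ _ hTN (fun v => blk m v ≤ i)]
    exact Scnt_val m e i hm hi
  have hSplit : Dset.card +
      (univ.filter fun c : Fin ((2*m)^2) =>
        (c : ℕ) < 2*m*(m+e) ∧ blk m (c : ℕ) = i ∧ (A c : ℕ) = i + 1).card = Sset.card := by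
    have h1 : Sset.filter (fun c : Fin ((2*m)^2) => (A c : ℕ) < i+1) = Dset := by
      ext c
      simp only [hSset, hDset, mem_filter, mem_univ, true_and]
      constructor
      · rintro ⟨⟨h1, h2⟩, h3⟩
        exact ⟨h1, h3⟩
      · rintro ⟨h1, h3⟩
        have := hval c h1
        exact ⟨⟨h1, by omega⟩, h3⟩
    have h2 : Sset.filter (fun c : Fin ((2*m)^2) => ¬ (A c : ℕ) < i+1)
        = univ.filter fun c : Fin ((2*m)^2) =>
            (c : ℕ) < 2*m*(m+e) ∧ blk m (c : ℕ) = i ∧ (A c : ℕ) = i + 1 := by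
      ext c
      simp only [hSset, mem_filter, mem_univ, true_and]
      constructor
      · rintro ⟨⟨h1, h2⟩, h3⟩
        have := hval c h1
        exact ⟨h1, by omega, by omega⟩
      · rintro ⟨h1, h2, h3⟩
        exact ⟨⟨h1, by omega⟩, by omega⟩
    rw [← h1, ← h2, card_filter_add_card_filter_not]
  -- put it together
  have hkey : (i+1)*(m+e) + highS.card * (m+e) = 2*m*(m+e) := by
    rw [← add_mul]
    congr 1
    omega
  omega


def AdjFun (m : ℕ) : Fin ((2*m)^2) → Fin (2*m) → Prop := fun c s =>
  (s : ℕ) = blk m (c : ℕ) ∨ ((s : ℕ) = blk m (c : ℕ) + 1 ∧ blk m (c : ℕ) + 1 < 2*m)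

def rFun (m i : ℕ) : ℕ := if i < m then i+1 else 2*m-1-i

lemma rFun_le (m i : ℕ) (hm : 0 < m) : rFun m i ≤ m := by
  unfold rFun; split_ifs <;> omega

def Wnat (m c : ℕ) : ℕ :=
  if c < 2*m*m ∧ c/(2*m) < rFun m (blk m c) ∧ blk m c + 1 < 2*m
  then blk m c + 1 else blk m c

lemma Wnat_lt (m : ℕ) (hm : 0 < m) (c : ℕ) : Wnat m c < 2*m := by
  unfold Wnat
  split_ifs with h
  · exact h.2.2
  · exact blk_lt m hm c

lemma Wnat_cases (m c : ℕ) : Wnat m c = blk m c ∨ Wnat m c = blk m c + 1 := by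
  unfold Wnat; split_ifs <;> simp

lemma Wnat_adj (m c : ℕ) :
    Wnat m c = blk m c ∨ (Wnat m c = blk m c + 1 ∧ blk m c + 1 < 2*m) := by
  unfold Wnat
  split_ifs with h
  · exact Or.inr ⟨rfl, h.2.2⟩
  · exact Or.inl rfl

/-- right-pushed count of the odd witness within block `j`. -/
lemma Wnat_pushed (m e j : ℕ) (hm : 0 < m) (hj : j < 2*m) :
    ((range (2*m*(m+e))).filter fun v => blk m v = j ∧ Wnat m v = j+1).card = rFun m j := by
  by_cases hj2 : j + 1 < 2*m
  · have hset : ((range (2*m*(m+e))).filter fun v => blk m v = j ∧ Wnat m v = j+1)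
        = ((range ((2*m)*m)).filter fun v => v % (2*m) = j ∧ v / (2*m) < rFun m j) := by
      ext v
      simp only [mem_filter, mem_range]
      constructor
      · rintro ⟨hv, hb, hw⟩
        have hne : Wnat m v ≠ blk m v := by omega
        unfold Wnat at hw
        split_ifs at hw with hcond
        · have hvm : v < 2*m*m := hcond.1
          have : blk m v = v % (2*m) := by unfold blk; rw [if_pos hvm]
          refine ⟨by omega, by omega, ?_⟩
          have := hcond.2.1
          rw [hb] at this
          exact this
        · omega
      · rintro ⟨hv, hmod, hdiv⟩
        have hvm : v < 2*m*m := by omega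
        have hb : blk m v = j := by unfold blk; rw [if_pos hvm]; exact hmod
        have hvT : v < 2*m*(m+e) := by nlinarith
        refine ⟨hvT, hb, ?_⟩
        unfold Wnat
        rw [if_pos ⟨hvm, by rw [hb]; exact hdiv, by rw [hb]; exact hj2⟩, hb]
    rw [hset, count_mod_div (2*m) m j (rFun m j) (by omega) hj (rFun_le m j hm)]
  · have hjeq : j = 2*m-1 := by omega
    have hset : ((range (2*m*(m+e))).filter fun v => blk m v = j ∧ Wnat m v = j+1) = ∅ := by
      ext v
      simp only [mem_filter, mem_range, notMem_empty, iff_false]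
      rintro ⟨hv, hb, hw⟩
      have := Wnat_lt m hm v
      omega
    rw [hset, card_empty]
    unfold rFun
    split_ifs <;> omega

/-- loads of the odd-boundary witness. -/
lemma Wnat_load (m e sv : ℕ) (hm : 0 < m) (he2 : e % 2 = 1) (hsv : sv < 2*m) :
    ((range (2*m*(m+e))).filter fun v => Wnat m v = sv).card ≤ m + e := by
  have hsplit : ((((range (2*m*(m+e))).filter fun v => Wnat m v = sv).filter
        fun v => blk m v = sv).card
      + ((((range (2*m*(m+e))).filter fun v => Wnat m v = sv)).filter
        fun v => ¬ blk m v = sv).card)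
      = ((range (2*m*(m+e))).filter fun v => Wnat m v = sv).card :=
    card_filter_add_card_filter_not _
  -- home part
  have hhome : (((range (2*m*(m+e))).filter fun v => Wnat m v = sv).filter
        fun v => blk m v = sv).card
        + ((range (2*m*(m+e))).filter fun v => blk m v = sv ∧ Wnat m v = sv+1).card
      = cnt m e sv := by
    have h1 : ((range (2*m*(m+e))).filter fun v => Wnat m v = sv).filter
          (fun v => blk m v = sv)
        = ((range (2*m*(m+e))).filter fun v => blk m v = sv).filter
          (fun v => Wnat m v = sv) := by
      rw [filter_filter, filter_filter]
      apply filter_congr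
      intro v _
      tauto
    have h2 : ((range (2*m*(m+e))).filter fun v => blk m v = sv ∧ Wnat m v = sv+1)
        = ((range (2*m*(m+e))).filter fun v => blk m v = sv).filter
          (fun v => ¬ Wnat m v = sv) := by
      rw [filter_filter]
      apply filter_congr
      intro v _
      have := Wnat_cases m v
      constructor
      · rintro ⟨hb, hw⟩; exact ⟨hb, by omega⟩
      · rintro ⟨hb, hw⟩; exact ⟨hb, by omega⟩
    rw [h1, h2, card_filter_add_card_filter_not]
    rfl
  -- pushed part
  have hpushed : ((((range (2*m*(m+e))).filter fun v => Wnat m v = sv)).filter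
        fun v => ¬ blk m v = sv).card
      = if 1 ≤ sv then rFun m (sv-1) else 0 := by
    split_ifs with hsv1
    · have h3 : (((range (2*m*(m+e))).filter fun v => Wnat m v = sv)).filter
            (fun v => ¬ blk m v = sv)
          = (range (2*m*(m+e))).filter fun v => blk m v = sv-1 ∧ Wnat m v = (sv-1)+1 := by
        rw [filter_filter]
        apply filter_congr
        intro v _
        have := Wnat_cases m v
        constructor
        · rintro ⟨hw, hb⟩; omega
        · rintro ⟨hb, hw⟩; omega
      rw [h3, Wnat_pushed m e (sv-1) hm (by omega)]
    · have h3 : (((range (2*m*(m+e))).filter fun v => Wnat m v = sv)).filter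
          (fun v => ¬ blk m v = sv) = ∅ := by
        ext v
        simp only [filter_filter, mem_filter, mem_range, notMem_empty, iff_false]
        rintro ⟨hv, hw, hb⟩
        have := Wnat_cases m v
        omega
      rw [h3, card_empty]
  have hWp := Wnat_pushed m e sv hm hsv
  have hcnt := cnt_formula m sv hm hsv e
  rw [show rFun m sv = if sv < m then sv+1 else 2*m-1-sv from rfl] at hWp
  rw [show rFun m (sv-1) = if sv-1 < m then (sv-1)+1 else 2*m-1-(sv-1) from rfl] at hpushed
  split_ifs at hWp hpushed hcnt <;> omega

/-- the witness showing the optimum at boundary `e` is at most `m + e`. -/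
lemma boundary_mem (m : ℕ) (hm : 0 < m) (e : ℕ) (he : e ≤ m) :
    (m+e) ∈ {B : ℕ | ∃ A : Fin ((2*m) ^ 2) → Fin (2*m),
      (∀ c : Fin ((2*m) ^ 2), (c : ℕ) < 2*m*(m+e) → AdjFun m c (A c)) ∧
      ∀ s : Fin (2*m),
        (Finset.univ.filter fun c : Fin ((2*m) ^ 2) =>
          (c : ℕ) < 2*m*(m+e) ∧ A c = s).card ≤ B} := by
  show ∃ A : Fin ((2*m) ^ 2) → Fin (2*m),
      (∀ c : Fin ((2*m) ^ 2), (c : ℕ) < 2*m*(m+e) → AdjFun m c (A c)) ∧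
      ∀ s : Fin (2*m),
        (Finset.univ.filter fun c : Fin ((2*m) ^ 2) =>
          (c : ℕ) < 2*m*(m+e) ∧ A c = s).card ≤ m+e
  have hTN : 2*m*(m+e) ≤ (2*m)^2 := by
    rw [pow_two]; exact Nat.mul_le_mul_left _ (by omega)
  by_cases hp : e % 2 = 1
  · refine ⟨fun c => ⟨Wnat m (c : ℕ), Wnat_lt m hm _⟩, ?_, ?_⟩
    · intro c _
      unfold AdjFun
      rcases Wnat_adj m (c : ℕ) with h | h
      · exact Or.inl h
      · exact Or.inr h
    · intro s
      have : (univ.filter fun c : Fin ((2*m)^2) =>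
            (c : ℕ) < 2*m*(m+e) ∧ (⟨Wnat m (c : ℕ), Wnat_lt m hm _⟩ : Fin (2*m)) = s).card
          = ((range (2*m*(m+e))).filter fun v => Wnat m v = (s : ℕ)).card := by
        rw [← card_fin_filter _ _ hTN (fun v => Wnat m v = (s : ℕ))]
        congr 1
        apply filter_congr
        intro c _
        rw [Fin.ext_iff]
      rw [this]
      exact Wnat_load m e (s : ℕ) hm hp s.isLt
  · refine ⟨fun c => ⟨blk m (c : ℕ), blk_lt m hm _⟩, ?_, ?_⟩
    · intro c _
      exact Or.inl rfl
    · intro s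
      have : (univ.filter fun c : Fin ((2*m)^2) =>
            (c : ℕ) < 2*m*(m+e) ∧ (⟨blk m (c : ℕ), blk_lt m hm _⟩ : Fin (2*m)) = s).card
          = ((range (2*m*(m+e))).filter fun v => blk m v = (s : ℕ)).card := by
        rw [← card_fin_filter _ _ hTN (fun v => blk m v = (s : ℕ))]
        congr 1
        apply filter_congr
        intro c _
        rw [Fin.ext_iff]
      rw [this]
      have hcnt : cnt m e (s : ℕ) = m + e := by
        rw [cnt_formula m (s : ℕ) hm s.isLt e]
        split_ifs <;> omega
      rw [show ((range (2*m*(m+e))).filter fun v => blk m v = (s : ℕ)).card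
        = cnt m e (s : ℕ) from rfl, hcnt]

lemma optLoad_boundary_le (m : ℕ) (hm : 0 < m) (e : ℕ) (he : e ≤ m) :
    optLoad (2*m) (2*m*(m+e)) (AdjFun m) ≤ m + e :=
  Nat.sInf_le (boundary_mem m hm e he)

lemma optLoad_final (m : ℕ) (hm : 0 < m) (hme : m % 2 = 0) :
    optLoad (2*m) ((2*m)^2) (AdjFun m) = 2*m := by
  have hsq : (2*m)^2 = 2*m*(m+m) := by ring
  have hmem := boundary_mem m hm m le_rfl
  apply le_antisymm
  · rw [hsq]
    calc optLoad (2*m) (2*m*(m+m)) (AdjFun m) ≤ m + m := optLoad_boundary_le m hm m le_rfl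
      _ = 2*m := by omega
  · unfold optLoad
    rw [← hsq] at hmem
    apply le_csInf ⟨m+m, hmem⟩
    rintro B ⟨A, hval, hload⟩
    have htot : (univ.filter fun c : Fin ((2*m)^2) => (c : ℕ) < (2*m)^2).card
        = (2*m)^2 := card_fin_lt _ _ le_rfl
    have hsum : (univ.filter fun c : Fin ((2*m)^2) => (c : ℕ) < (2*m)^2).card
        = ∑ s ∈ (univ : Finset (Fin (2*m))),
            (univ.filter fun c : Fin ((2*m)^2) => (c : ℕ) < (2*m)^2 ∧ A c = s).card := by
      rw [card_eq_sum_card_fiberwise (f := fun c => A c)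
        (t := (univ : Finset (Fin (2*m)))) (fun c _ => mem_univ _)]
      apply sum_congr rfl
      intro s _
      rw [filter_filter]
    have hB : (2*m)*(2*m) ≤ 2*m*B := by
      rw [← pow_two, ← htot, hsum]
      calc ∑ s ∈ (univ : Finset (Fin (2*m))),
            (univ.filter fun c : Fin ((2*m)^2) => (c : ℕ) < (2*m)^2 ∧ A c = s).card
          ≤ ∑ _s ∈ (univ : Finset (Fin (2*m))), B := sum_le_sum (fun s _ => hload s)
        _ = 2*m*B := by rw [sum_const, card_univ, Fintype.card_fin, smul_eq_mul]
    exact Nat.le_of_mul_le_mul_left hB (show 0 < 2*m by omega)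


/-- number of block-`i` clients (present before time `t`) assigned to server `i+1`. -/
def Ycnt (m : ℕ) (A : Fin ((2*m)^2) → Fin (2*m)) (t i : ℕ) : ℕ :=
  (univ.filter fun c : Fin ((2*m)^2) =>
    (c : ℕ) < t ∧ blk m (c : ℕ) = i ∧ (A c : ℕ) = i + 1).card

/-- number of block-`i` clients reassigned between `A` and `A'`. -/
def chgB (m : ℕ) (A A' : Fin ((2*m)^2) → Fin (2*m)) (t i : ℕ) : ℕ :=
  (univ.filter fun c : Fin ((2*m)^2) =>
    (c : ℕ) < t ∧ blk m (c : ℕ) = i ∧ A c ≠ A' c).card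

lemma step_up (m : ℕ) (A A' : Fin ((2*m)^2) → Fin (2*m)) (t i : ℕ)
    (hblk : blk m t ≠ i) :
    Ycnt m A' (t+1) i ≤ Ycnt m A t i + chgB m A A' t i := by
  unfold Ycnt chgB
  refine le_trans (card_le_card ?_) (card_union_le _ _)
  intro c hc
  simp only [mem_filter, mem_univ, true_and, mem_union] at hc ⊢
  obtain ⟨hct, hcb, hca⟩ := hc
  have hct' : (c : ℕ) < t := by
    rcases Nat.lt_succ_iff_lt_or_eq.mp hct with h | h
    · exact h
    · exact absurd (h ▸ hcb) hblk
  by_cases hch : A c = A' c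
  · exact Or.inl ⟨hct', hcb, by rw [hch]; exact hca⟩
  · exact Or.inr ⟨hct', hcb, hch⟩

lemma step_down (m : ℕ) (A A' : Fin ((2*m)^2) → Fin (2*m)) (t i : ℕ) :
    Ycnt m A t i ≤ Ycnt m A' (t+1) i + chgB m A A' t i := by
  unfold Ycnt chgB
  refine le_trans (card_le_card ?_) (card_union_le _ _)
  intro c hc
  simp only [mem_filter, mem_univ, true_and, mem_union] at hc ⊢
  obtain ⟨hct, hcb, hca⟩ := hc
  by_cases hch : A c = A' c
  · exact Or.inl ⟨by omega, hcb, by rw [← hch]; exact hca⟩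
  · exact Or.inr ⟨hct, hcb, hch⟩

lemma travel_up (m : ℕ) (A : ℕ → Fin ((2*m)^2) → Fin (2*m)) (i a b : ℕ) (hab : a ≤ b)
    (hblk : ∀ t, a ≤ t → t < b → blk m t ≠ i) :
    Ycnt m (A b) b i ≤ Ycnt m (A a) a i + ∑ t ∈ Ico a b, chgB m (A t) (A (t+1)) t i := by
  induction b, hab using Nat.le_induction with
  | base => simp
  | succ b hab ih =>
    have h1 := step_up m (A b) (A (b+1)) b i (hblk b hab (by omega))
    have h2 := ih (fun t ht1 ht2 => hblk t ht1 (by omega))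
    rw [Finset.sum_Ico_succ_top hab]
    omega

lemma travel_down (m : ℕ) (A : ℕ → Fin ((2*m)^2) → Fin (2*m)) (i a b : ℕ) (hab : a ≤ b) :
    Ycnt m (A a) a i ≤ Ycnt m (A b) b i + ∑ t ∈ Ico a b, chgB m (A t) (A (t+1)) t i := by
  induction b, hab using Nat.le_induction with
  | base => simp
  | succ b hab ih =>
    have h1 := step_down m (A b) (A (b+1)) b i
    rw [Finset.sum_Ico_succ_top hab]
    omega

lemma chg_ge (m : ℕ) (hm : 0 < m) (A A' : Fin ((2*m)^2) → Fin (2*m)) (t : ℕ)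
    (I : Finset ℕ) (hI : I ⊆ range (2*m)) :
    ∑ i ∈ I, chgB m A A' t i
      ≤ (univ.filter fun c : Fin ((2*m)^2) => (c : ℕ) < t ∧ A c ≠ A' c).card := by
  have hfib : (univ.filter fun c : Fin ((2*m)^2) => (c : ℕ) < t ∧ A c ≠ A' c).card
      = ∑ i ∈ range (2*m),
          ((univ.filter fun c : Fin ((2*m)^2) => (c : ℕ) < t ∧ A c ≠ A' c).filter
            (fun c : Fin ((2*m)^2) => blk m (c : ℕ) = i)).card :=
    card_eq_sum_card_fiberwise (fun c _ => mem_range.mpr (blk_lt m hm _))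
  rw [hfib]
  refine le_trans (sum_le_sum_of_subset hI) (le_of_eq (sum_congr rfl ?_))
  intro i _
  unfold chgB
  rw [filter_filter]
  congr 1
  apply filter_congr
  intro c _
  tauto

lemma sum_mirror (m : ℕ) : ∑ i ∈ Ico m (2*m), (2*m-1-i) = ∑ j ∈ range m, j := by
  apply sum_bij' (fun i _ => 2*m-1-i) (fun j _ => 2*m-1-j)
  · intro i hi
    simp only [mem_Ico] at hi
    simp only [mem_range]
    omega
  · intro j hj
    simp only [mem_range] at hj
    simp only [mem_Ico]
    omega
  · intro i hi
    simp only [mem_Ico] at hi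
    omega
  · intro j hj
    simp only [mem_range] at hj
    omega
  · intro i hi
    rfl

lemma sums_eq (m : ℕ) (hm : 0 < m) :
    ∑ i ∈ Ico m (2*m), (2*m-1-i) + ∑ i ∈ range m, (i+1) = m*m := by
  rw [sum_mirror]
  have h1 : ∑ i ∈ range m, (i+1) = (∑ i ∈ range m, i) + m := by
    rw [sum_add_distrib, sum_const, card_range, smul_eq_mul, mul_one]
  have h2 := Finset.sum_range_id_mul_two m
  have h3 : m*(m-1) + m = m*m := by
    zify [show 1 ≤ m from hm]
    ring
  omega

lemma sum_epochs (m : ℕ) (f : ℕ → ℕ) (n : ℕ) :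
    ∑ e ∈ range n, (∑ t ∈ Ico (2*m*(m+e)) (2*m*(m+e+1)), f t)
      = ∑ t ∈ Ico (2*m*(m+0)) (2*m*(m+n)), f t := by
  induction n with
  | zero => simp
  | succ n ih =>
    rw [show (2*m*(m+(n+1))) = 2*m*(m+n+1) from by ring, sum_range_succ, ih,
      Finset.sum_Ico_consecutive _ (Nat.mul_le_mul_left _ (by omega))
        (Nat.mul_le_mul_left _ (by omega))]

lemma sum_pairs (f : ℕ → ℕ) (k : ℕ) :
    ∑ e ∈ range (2*k), f e = ∑ u ∈ range k, (f (2*u) + f (2*u+1)) := by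
  induction k with
  | zero => simp
  | succ k ih =>
    rw [show 2*(k+1) = 2*k+1+1 from by ring, sum_range_succ, sum_range_succ, ih,
      sum_range_succ]
    ring

lemma main_bound (m k : ℕ) (hm : 0 < m) (hk : m = 2*k)
    (A : ℕ → Fin ((2*m)^2) → Fin (2*m))
    (H1 : ∀ t, ∀ c : Fin ((2*m)^2), (c : ℕ) < t → AdjFun m c (A t c))
    (H2 : ∀ t ≤ (2*m)^2, ∀ s : Fin (2*m),
      (univ.filter fun c : Fin ((2*m)^2) => (c : ℕ) < t ∧ A t c = s).card
        ≤ optLoad (2*m) t (AdjFun m)) :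
    k * (m*m) ≤ ∑ t ∈ range ((2*m)^2),
      (univ.filter fun c : Fin ((2*m)^2) => (c : ℕ) < t ∧ A t c ≠ A (t+1) c).card := by
  -- pinned Y values at epoch boundaries
  have pinY : ∀ e, e ≤ m → ∀ i, i < 2*m → ∀ T, T = 2*m*(m+e) →
      Ycnt m (A T) T i = target m e i := by
    rintro e he i hi T rfl
    have hTN : 2*m*(m+e) ≤ (2*m)^2 := by
      rw [pow_two]; exact Nat.mul_le_mul_left _ (by omega)
    apply pinned m hm e he (A (2*m*(m+e)))
    · intro c hc
      rcases H1 _ c hc with h | h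
      · exact Or.inl h
      · exact Or.inr h.1
    · intro s
      exact le_trans (H2 _ hTN s) (optLoad_boundary_le m hm e he)
    · exact hi
  -- per-pair lower bound
  have pair_bound : ∀ e, e % 2 = 0 → e + 2 ≤ m →
      m*m ≤ (∑ t ∈ Ico (2*m*(m+e)) (2*m*(m+e+1)),
          (univ.filter fun c : Fin ((2*m)^2) =>
            (c : ℕ) < t ∧ A t c ≠ A (t+1) c).card)
        + (∑ t ∈ Ico (2*m*(m+(e+1))) (2*m*(m+(e+1)+1)),
          (univ.filter fun c : Fin ((2*m)^2) =>
            (c : ℕ) < t ∧ A t c ≠ A (t+1) c).card) := by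
    intro e he0 he2
    have k2 : 2*m*(m+e+1) = 2*m*(m+e) + 2*m := by ring
    -- down epoch: top blocks must fill up
    have hdown : ∀ i, m ≤ i → i < 2*m →
        2*m-1-i ≤ ∑ t ∈ Ico (2*m*(m+e)) (2*m*(m+e+1)), chgB m (A t) (A (t+1)) t i := by
      intro i hi1 hi2
      have htr := travel_up m A i (2*m*(m+e)) (2*m*(m+e+1))
        (Nat.mul_le_mul_left _ (by omega))
        (by
          intro t ht1 ht2
          rw [blk_epoch_eq m hm e t ht1 ht2, if_pos he0]
          omega)
      have hY1 := pinY e (by omega) i hi2 (2*m*(m+e)) rfl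
      have hY2 := pinY (e+1) (by omega) i hi2 (2*m*(m+e+1)) (by ring)
      have ht1 : target m e i = 0 := by
        unfold target
        rw [if_neg (by omega)]
      have ht2 : target m (e+1) i = 2*m-1-i := by
        unfold target
        rw [if_pos (by omega), if_neg (by omega)]
      omega
    -- up epoch: bottom blocks must empty
    have hup : ∀ i, i < m →
        i+1 ≤ ∑ t ∈ Ico (2*m*(m+(e+1))) (2*m*(m+(e+1)+1)), chgB m (A t) (A (t+1)) t i := by
      intro i hi
      have htr := travel_down m A i (2*m*(m+(e+1))) (2*m*(m+(e+1)+1))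
        (Nat.mul_le_mul_left _ (by omega))
      have hY1 := pinY (e+1) (by omega) i (by omega) (2*m*(m+(e+1))) (by ring)
      have hY2 := pinY (e+2) (by omega) i (by omega) (2*m*(m+(e+1)+1)) (by ring)
      have ht1 : target m (e+1) i = i+1 := by
        unfold target
        rw [if_pos (by omega), if_pos hi]
      have ht2 : target m (e+2) i = 0 := by
        unfold target
        rw [if_neg (by omega)]
      omega
    have B1 : ∑ i ∈ Ico m (2*m), (2*m-1-i)
        ≤ ∑ t ∈ Ico (2*m*(m+e)) (2*m*(m+e+1)),
            (univ.filter fun c : Fin ((2*m)^2) =>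
              (c : ℕ) < t ∧ A t c ≠ A (t+1) c).card := by
      calc ∑ i ∈ Ico m (2*m), (2*m-1-i)
          ≤ ∑ i ∈ Ico m (2*m), ∑ t ∈ Ico (2*m*(m+e)) (2*m*(m+e+1)),
              chgB m (A t) (A (t+1)) t i := by
            apply sum_le_sum
            intro i hi
            obtain ⟨h1, h2⟩ := mem_Ico.mp hi
            exact hdown i h1 h2
        _ = ∑ t ∈ Ico (2*m*(m+e)) (2*m*(m+e+1)), ∑ i ∈ Ico m (2*m),
              chgB m (A t) (A (t+1)) t i := sum_comm
        _ ≤ _ := by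
            apply sum_le_sum
            intro t _
            exact chg_ge m hm (A t) (A (t+1)) t (Ico m (2*m))
              (by intro i hi; obtain ⟨h1, h2⟩ := mem_Ico.mp hi; exact mem_range.mpr h2)
    have B2 : ∑ i ∈ range m, (i+1)
        ≤ ∑ t ∈ Ico (2*m*(m+(e+1))) (2*m*(m+(e+1)+1)),
            (univ.filter fun c : Fin ((2*m)^2) =>
              (c : ℕ) < t ∧ A t c ≠ A (t+1) c).card := by
      calc ∑ i ∈ range m, (i+1)
          ≤ ∑ i ∈ range m, ∑ t ∈ Ico (2*m*(m+(e+1))) (2*m*(m+(e+1)+1)),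
              chgB m (A t) (A (t+1)) t i := by
            apply sum_le_sum
            intro i hi
            exact hup i (mem_range.mp hi)
        _ = ∑ t ∈ Ico (2*m*(m+(e+1))) (2*m*(m+(e+1)+1)), ∑ i ∈ range m,
              chgB m (A t) (A (t+1)) t i := sum_comm
        _ ≤ _ := by
            apply sum_le_sum
            intro t _
            exact chg_ge m hm (A t) (A (t+1)) t (range m)
              (by intro i hi; exact mem_range.mpr (by have := mem_range.mp hi; omega))
    have := sums_eq m hm
    omega
  -- assemble
  have hsub : ∑ t ∈ Ico (2*m*(m+0)) (2*m*(m+m)),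
        (univ.filter fun c : Fin ((2*m)^2) => (c : ℕ) < t ∧ A t c ≠ A (t+1) c).card
      ≤ ∑ t ∈ range ((2*m)^2),
        (univ.filter fun c : Fin ((2*m)^2) => (c : ℕ) < t ∧ A t c ≠ A (t+1) c).card := by
    apply sum_le_sum_of_subset
    intro t ht
    obtain ⟨h1, h2⟩ := mem_Ico.mp ht
    rw [mem_range]
    have : 2*m*(m+m) = (2*m)^2 := by ring
    omega
  have hpairs : ∑ e ∈ range m, (∑ t ∈ Ico (2*m*(m+e)) (2*m*(m+e+1)),
        (univ.filter fun c : Fin ((2*m)^2) => (c : ℕ) < t ∧ A t c ≠ A (t+1) c).card)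
      = ∑ u ∈ range k, ((∑ t ∈ Ico (2*m*(m+2*u)) (2*m*(m+2*u+1)),
          (univ.filter fun c : Fin ((2*m)^2) => (c : ℕ) < t ∧ A t c ≠ A (t+1) c).card)
        + (∑ t ∈ Ico (2*m*(m+(2*u+1))) (2*m*(m+(2*u+1)+1)),
          (univ.filter fun c : Fin ((2*m)^2) => (c : ℕ) < t ∧ A t c ≠ A (t+1) c).card)) := by
    rw [show range m = range (2*k) from by rw [hk]]
    exact sum_pairs _ k
  have hlow : k * (m*m) ≤ ∑ e ∈ range m, (∑ t ∈ Ico (2*m*(m+e)) (2*m*(m+e+1)),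
        (univ.filter fun c : Fin ((2*m)^2) => (c : ℕ) < t ∧ A t c ≠ A (t+1) c).card) := by
    rw [hpairs]
    calc k * (m*m) = ∑ _u ∈ range k, m*m := by rw [sum_const, card_range, smul_eq_mul]
      _ ≤ _ := by
          apply sum_le_sum
          intro u hu
          have hu' := mem_range.mp hu
          exact pair_bound (2*u) (by omega) (by omega)
  exact le_trans hlow (le_trans (le_of_eq (sum_epochs m _ m)) hsub)

end S19

/-- Lower bound for exact online load balancing: there is a constant `a > 0` such that
for every positive `L` divisible by `4` there is a bipartite graph with `L²` clients
and `L` servers, of optimum maximum load `L`, and an insertion order of the clients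
(here: by increasing index), such that any algorithm maintaining at every time an
assignment of the present clients to neighboring servers whose maximum load equals the
current optimum must make at least `a·L³` reassignments in total. -/
theorem stmt_19 :
    ∃ a : ℝ, 0 < a ∧
      ∀ L : ℕ, 0 < L → 4 ∣ L →
        ∃ Adj : Fin (L ^ 2) → Fin L → Prop,
          optLoad L (L ^ 2) Adj = L ∧
          ∀ A : ℕ → Fin (L ^ 2) → Fin L,
            (∀ t, ∀ c : Fin (L ^ 2), (c : ℕ) < t → Adj c (A t c)) →
            (∀ t ≤ L ^ 2, ∀ s : Fin L,
              (Finset.univ.filter fun c : Fin (L ^ 2) =>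
                (c : ℕ) < t ∧ A t c = s).card ≤ optLoad L t Adj) →
            a * (L : ℝ) ^ 3 ≤
              ∑ t ∈ Finset.range (L ^ 2),
                ((Finset.univ.filter fun c : Fin (L ^ 2) =>
                  (c : ℕ) < t ∧ A t c ≠ A (t + 1) c).card : ℝ) := by
  refine ⟨1/16, by norm_num, ?_⟩
  intro L hL hdiv
  obtain ⟨k, hk⟩ := hdiv
  have hLm : L = 2*(2*k) := by omega
  subst hLm
  have hm : 0 < 2*k := by omega
  refine ⟨S19.AdjFun (2*k), S19.optLoad_final (2*k) hm (by omega), ?_⟩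
  intro A H1 H2
  have hmain := S19.main_bound (2*k) k hm rfl A H1 H2
  have hsum : ∑ t ∈ Finset.range ((2*(2*k))^2),
        ((Finset.univ.filter fun c : Fin ((2*(2*k))^2) =>
          (c : ℕ) < t ∧ A t c ≠ A (t+1) c).card : ℝ)
      = ((∑ t ∈ Finset.range ((2*(2*k))^2),
          (Finset.univ.filter fun c : Fin ((2*(2*k))^2) =>
            (c : ℕ) < t ∧ A t c ≠ A (t+1) c).card : ℕ) : ℝ) := by
    rw [Nat.cast_sum]
  rw [hsum]
  have h2 : (1/16 : ℝ) * ((2*(2*k) : ℕ) : ℝ)^3 = ((k * (2*k*(2*k)) : ℕ) : ℝ) := by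
    push_cast
    ring
  rw [h2]
  exact_mod_cast hmain
end
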